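/- arXiv:2011.00352 — 7 statements merged into one kernel-verified Lean document; each statement's English description precedes it below -/
import Mathlib

section
/- Let P be a poset whose incomparability graph Inc(P) contains finite induced paths of unbounded length (for every n there is an induced path of length n in Inc(P)). Then Inc(P) embeds a direct sum of finite induced paths of unbounded length or a complete sum of finite induced paths of unbounded length. -/
open SimpleGraph

/-- An induced path of length `n` in `G`: an injective sequence of `n+1` vertices,
adjacent exactly when consecutive. -/
def IsInducedPath {V : Type*} (G : SimpleGraph V) {n : ℕ} (x : Fin (n + 1) → V) : Prop :=
  Function.Injective x ∧ ∀ i j, G.Adj (x i) (x j) ↔ Nat.dist i.val j.val = 1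

/-- `G` contains finite induced paths of unbounded length. -/
def HasUnboundedPaths {V : Type*} (G : SimpleGraph V) : Prop :=
  ∀ n : ℕ, ∃ x : Fin (n + 1) → V, IsInducedPath G x

/-- `G` is path-minimal. -/
def PathMinimal {V : Type*} (G : SimpleGraph V) : Prop :=
  HasUnboundedPaths G ∧
    ∀ A : Set V, HasUnboundedPaths (G.induce A) → Nonempty (G ↪g G.induce A)

/-- The age of `G` is contained in the age of `H`. -/
def AgeSubset {V W : Type*} (G : SimpleGraph V) (H : SimpleGraph W) : Prop :=
  ∀ (n : ℕ) (F : SimpleGraph (Fin n)), Nonempty (F ↪g G) → Nonempty (F ↪g H)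

/-- The age of `G` contains no infinite antichain for embeddability. -/
def AgeWQO {V : Type*} (G : SimpleGraph V) : Prop :=
  ∀ f : ℕ → Σ n : ℕ, SimpleGraph (Fin n),
    (∀ i, Nonempty ((f i).2 ↪g G)) →
    ∃ i j, i ≠ j ∧ Nonempty ((f i).2 ↪g (f j).2)

/-- The set `A` carries an induced path of length `n` of `G` (covering all of `A`). -/
def IsPathOn {V : Type*} (G : SimpleGraph V) (A : Set V) (n : ℕ) : Prop :=
  ∃ x : Fin (n + 1) → V, Function.Injective x ∧ Set.range x = A ∧
    ∀ i j, G.Adj (x i) (x j) ↔ Nat.dist i.val j.val = 1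

/-- `G` embeds a direct sum of finite induced paths of unbounded length. -/
def EmbedsDirectSumOfPaths {V : Type*} (G : SimpleGraph V) : Prop :=
  ∃ A : ℕ → Set V, (∀ n, (A n).Finite) ∧
    (∀ m n, m ≠ n → Disjoint (A m) (A n)) ∧
    (∀ m n, m ≠ n → ∀ x ∈ A m, ∀ y ∈ A n, ¬ G.Adj x y) ∧
    ∀ n, ∃ m, n ≤ m ∧ IsPathOn G (A n) m

/-- `G` embeds a complete sum of finite induced paths of unbounded length. -/
def EmbedsCompleteSumOfPaths {V : Type*} (G : SimpleGraph V) : Prop :=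
  ∃ A : ℕ → Set V, (∀ n, (A n).Finite) ∧
    (∀ m n, m ≠ n → Disjoint (A m) (A n)) ∧
    (∀ m n, m ≠ n → ∀ x ∈ A m, ∀ y ∈ A n, G.Adj x y) ∧
    ∀ n, ∃ m, n ≤ m ∧ IsPathOn G (A n) m

/-- An isometric path of length `n` in `G`. -/
def IsIsometricPath {V : Type*} (G : SimpleGraph V) {n : ℕ} (x : Fin (n + 1) → V) : Prop :=
  (∀ i : Fin n, G.Adj (x i.castSucc) (x i.succ)) ∧
  ∀ i j, G.dist (x i) (x j) = Nat.dist i.val j.val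

/-- The set `A` carries an induced path of length `n` of `G` which is isometric in `G`. -/
def IsIsometricPathOn {V : Type*} (G : SimpleGraph V) (A : Set V) (n : ℕ) : Prop :=
  ∃ x : Fin (n + 1) → V, Function.Injective x ∧ Set.range x = A ∧
    (∀ i j, G.Adj (x i) (x j) ↔ Nat.dist i.val j.val = 1) ∧
    (∀ i j, G.dist (x i) (x j) = Nat.dist i.val j.val)

/-- The incomparability graph of a poset. -/
def incGraph (α : Type*) [PartialOrder α] : SimpleGraph α where
  Adj a b := ¬ a ≤ b ∧ ¬ b ≤ a
  symm := ⟨fun _ _ h => ⟨h.2, h.1⟩⟩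
  loopless := ⟨fun _ h => h.1 le_rfl⟩

/-- `w` is a (finite) factor of the infinite word `u`. -/
def IsFactor {A : Type*} (u : ℕ → A) (w : List A) : Prop :=
  ∃ p : ℕ, w = (List.range w.length).map fun i => u (p + i)

/-- `u` is uniformly recurrent. -/
def UniformlyRecurrent {A : Type*} (u : ℕ → A) : Prop :=
  ∀ n : ℕ, ∃ m : ℕ, ∀ v w : List A, IsFactor u v → IsFactor u w →
    v.length = n → w.length = m → v <:+: w

/-- The set of factors of `u` is inexhaustible. -/
def Inexhaustible {A : Type*} (u : ℕ → A) : Prop :=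
  ∀ v v' : List A, IsFactor u v → IsFactor u v' → ∃ w : List A, IsFactor u (v ++ w ++ v')

/-- The path on `n` vertices. -/
def pathG (n : ℕ) : SimpleGraph (Fin n) where
  Adj i j := Nat.dist i.val j.val = 1
  symm := ⟨fun i j h => by rwa [Nat.dist_comm]⟩
  loopless := ⟨fun i h => by simp [Nat.dist_self] at h⟩

/-- The graph `Ĝ_k` on `ℕ × ℕ`. -/
def Ghat (k : ℕ) : SimpleGraph (ℕ × ℕ) where
  Adj a b := (a.1 = b.1 ∧ Nat.dist a.2 b.2 = 1) ∨ (a.1 ≠ b.1 ∧ ¬ a.2 ≡ b.2 [MOD k])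
  symm := by
    constructor
    intro a b h
    rcases h with ⟨h1, h2⟩ | ⟨h1, h2⟩
    · exact Or.inl ⟨h1.symm, by rwa [Nat.dist_comm]⟩
    · exact Or.inr ⟨h1.symm, fun h => h2 h.symm⟩
  loopless := by
    constructor
    intro a h
    rcases h with ⟨_, h2⟩ | ⟨h1, _⟩
    · simp [Nat.dist_self] at h2
    · exact h1 rfl

/-- The vertex set of `Q̂_k`. -/
def Qset : Set (ℕ × ℕ) := {p : ℕ × ℕ | p.2 < p.1 + 5}

/-- The graph `Q̂_k`, induced by `Ĝ_k` on `Qset`. -/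
def Qhat (k : ℕ) : SimpleGraph Qset := (Ghat k).induce Qset

/-- `M` is a module (autonomous set) of `G`. -/
def IsModule {V : Type*} (G : SimpleGraph V) (M : Set V) : Prop :=
  ∀ v ∉ M, (∀ x ∈ M, G.Adj v x) ∨ (∀ x ∈ M, ¬ G.Adj v x)

/-- A trivial subset of a vertex set: empty, a singleton, or everything. -/
def IsTrivialSet {V : Type*} (M : Set V) : Prop :=
  M = ∅ ∨ (∃ v, M = {v}) ∨ M = Set.univ

/-- The graph `Ĝ_{u,⊕}` associated with the word `u : ℕ → Bool` and the Boolean sum. -/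
def GhatXor (u : ℕ → Bool) : SimpleGraph (ℕ × ℕ) where
  Adj a b := (a.1 = b.1 ∧ Nat.dist a.2 b.2 = 1) ∨ (a.1 ≠ b.1 ∧ u a.2 ≠ u b.2)
  symm := by
    constructor
    intro a b h
    rcases h with ⟨h1, h2⟩ | ⟨h1, h2⟩
    · exact Or.inl ⟨h1.symm, by rwa [Nat.dist_comm]⟩
    · exact Or.inr ⟨h1.symm, h2.symm⟩
  loopless := by
    constructor
    intro a h
    rcases h with ⟨_, h2⟩ | ⟨h1, _⟩
    · simp [Nat.dist_self] at h2
    · exact h1 rfl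

/-- The graph `Ĝ_{u,π₂}` associated with the word `u : ℕ → Bool` and the second projection. -/
def GhatPi2 (u : ℕ → Bool) : SimpleGraph (ℕ × ℕ) where
  Adj a b := (a.1 = b.1 ∧ Nat.dist a.2 b.2 = 1) ∨
    (a.1 < b.1 ∧ u b.2 = true) ∨ (b.1 < a.1 ∧ u a.2 = true)
  symm := by
    constructor
    intro a b h
    rcases h with ⟨h1, h2⟩ | ⟨h1, h2⟩ | ⟨h1, h2⟩
    · exact Or.inl ⟨h1.symm, by rwa [Nat.dist_comm]⟩
    · exact Or.inr (Or.inr ⟨h1, h2⟩)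
    · exact Or.inr (Or.inl ⟨h1, h2⟩)
  loopless := by
    constructor
    intro a h
    rcases h with ⟨_, h2⟩ | ⟨h1, _⟩ | ⟨h1, _⟩
    · simp [Nat.dist_self] at h2
    · exact lt_irrefl _ h1
    · exact lt_irrefl _ h1

/-- `u` has a constant factor of length `m`. -/
def HasConstFactor (u : ℕ → Bool) (m : ℕ) : Prop :=
  ∃ p : ℕ, ∀ i < m, u (p + i) = u p

namespace IncAux

variable {α : Type*} [PartialOrder α]

lemma incGraph_adj {a b : α} : (incGraph α).Adj a b ↔ ¬ a ≤ b ∧ ¬ b ≤ a := Iff.rfl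

/-- A walk (induced path) of length `L` inside `U`, indexed by `ℕ` restricted to `[0,L]`. -/
def IsWalk (U : Set α) (L : ℕ) (y : ℕ → α) : Prop :=
  (∀ i, i ≤ L → y i ∈ U) ∧
  (∀ i j, i ≤ L → j ≤ L → y i = y j → i = j) ∧
  (∀ i j, i ≤ L → j ≤ L → ((incGraph α).Adj (y i) (y j) ↔ Nat.dist i j = 1))

def Unb (U : Set α) : Prop := ∀ n, ∃ y, IsWalk U n y

lemma isWalk_mono {U V : Set α} (h : U ⊆ V) {L : ℕ} {y : ℕ → α} (hw : IsWalk U L y) :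
    IsWalk V L y :=
  ⟨fun i hi => h (hw.1 i hi), hw.2.1, hw.2.2⟩

lemma isWalk_restrict {U : Set α} {L : ℕ} {y : ℕ → α} (hw : IsWalk U L y) {s d : ℕ}
    (h : s + d ≤ L) : IsWalk U d (fun i => y (s + i)) := by
  obtain ⟨a, b, c⟩ := hw
  refine ⟨fun i hi => a _ (by omega), fun i j hi hj he => ?_, fun i j hi hj => ?_⟩
  · have := b (s+i) (s+j) (by omega) (by omega) he; omega
  · have hd : Nat.dist (s+i) (s+j) = Nat.dist i j := by simp [Nat.dist]; omega
    rw [c (s+i) (s+j) (by omega) (by omega), hd]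

lemma unb_mono {U V : Set α} (h : U ⊆ V) (hU : Unb U) : Unb V :=
  fun n => (hU n).imp fun _ hy => isWalk_mono h hy

lemma not_unb {S : Set α} (h : ¬ Unb S) : ∃ B, ∀ d, B ≤ d → ∀ y, ¬ IsWalk S d y := by
  rw [Unb] at h; push_neg at h
  obtain ⟨B, hB⟩ := h
  exact ⟨B, fun d hd y hy => hB _ (isWalk_restrict hy (s := 0) (by omega))⟩

lemma isWalk_reverse {U : Set α} {L : ℕ} {y : ℕ → α} (hw : IsWalk U L y) :
    IsWalk U L (fun i => y (L - i)) := by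
  obtain ⟨a, b, c⟩ := hw
  refine ⟨fun i hi => a _ (by omega), fun i j hi hj he => ?_, fun i j hi hj => ?_⟩
  · have := b (L-i) (L-j) (by omega) (by omega) he; omega
  · have hd : Nat.dist (L-i) (L-j) = Nat.dist i j := by simp [Nat.dist]; omega
    rw [c (L-i) (L-j) (by omega) (by omega), hd]

lemma walk_comp {U : Set α} {L : ℕ} {y : ℕ → α} (hw : IsWalk U L y) {i j : ℕ}
    (hi : i ≤ L) (hj : j ≤ L) (hd : Nat.dist i j ≠ 1) (hij : i ≠ j) :
    y i < y j ∨ y j < y i := by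
  have hne : y i ≠ y j := fun he => hij (hw.2.1 i j hi hj he)
  have hna : ¬ (incGraph α).Adj (y i) (y j) := fun ha => hd ((hw.2.2 i j hi hj).1 ha)
  rw [incGraph_adj] at hna
  by_cases h1 : y i ≤ y j
  · exact Or.inl (lt_of_le_of_ne h1 hne)
  · have h2 : y j ≤ y i := by tauto
    exact Or.inr (lt_of_le_of_ne h2 hne.symm)

lemma walk_adj {U : Set α} {L : ℕ} {y : ℕ → α} (hw : IsWalk U L y) {i j : ℕ}
    (hi : i ≤ L) (hj : j ≤ L) (hd : Nat.dist i j = 1) :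
    (incGraph α).Adj (y i) (y j) := (hw.2.2 i j hi hj).2 hd

def Oriented (L : ℕ) (y : ℕ → α) : Prop := ∀ i j, i + 2 ≤ j → j ≤ L → y i < y j

lemma fwd {U : Set α} {L : ℕ} {y : ℕ → α} (hw : IsWalk U L y) (h02 : y 0 < y 2)
    (hL : 2 ≤ L) : Oriented L y := by
  have consec : ∀ i, i + 2 ≤ L → y i < y (i+2) := by
    intro i
    induction i with
    | zero => intro _; exact h02
    | succ k ih =>
      intro hk
      have h1 : y k < y (k+2) := ih (by omega)
      rcases walk_comp hw (i := k+1) (j := k+3) (by omega) (by omega)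
        (by simp [Nat.dist]) (by omega) with hc | hc
      · exact hc
      · exfalso
        rcases walk_comp hw (i := k) (j := k+3) (by omega) (by omega)
          (by simp [Nat.dist]) (by omega) with h' | h'
        · have hlt : y k < y (k+1) := h'.trans hc
          have hadj := walk_adj hw (i := k) (j := k+1) (by omega) (by omega) (by simp [Nat.dist])
          exact (incGraph_adj.1 hadj).1 hlt.le
        · have hlt : y (k+3) < y (k+2) := h'.trans h1
          have hadj := walk_adj hw (i := k+2) (j := k+3) (by omega) (by omega) (by simp [Nat.dist])
          exact (incGraph_adj.1 hadj).2 hlt.le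
  intro i j hij
  induction j, hij using Nat.le_induction with
  | base => intro h2L; exact consec i h2L
  | succ j hj ih =>
    intro hjL
    have h1 : y i < y j := ih (by omega)
    rcases walk_comp hw (i := i) (j := j+1) (by omega) (by omega)
      (by simp [Nat.dist]; omega) (by omega) with hc | hc
    · exact hc
    · exfalso
      have hlt : y (j+1) < y j := hc.trans h1
      have hadj := walk_adj hw (i := j) (j := j+1) (by omega) (by omega) (by simp [Nat.dist])
      exact (incGraph_adj.1 hadj).2 hlt.le

lemma fwd' {U : Set α} {L : ℕ} {y : ℕ → α} (hw : IsWalk U L y) (h20 : y 2 < y 0)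
    (hL : 2 ≤ L) : ∀ i j, i + 2 ≤ j → j ≤ L → y j < y i := by
  have consec : ∀ i, i + 2 ≤ L → y (i+2) < y i := by
    intro i
    induction i with
    | zero => intro _; exact h20
    | succ k ih =>
      intro hk
      have h1 : y (k+2) < y k := ih (by omega)
      rcases walk_comp hw (i := k+1) (j := k+3) (by omega) (by omega)
        (by simp [Nat.dist]) (by omega) with hc | hc
      · exfalso
        rcases walk_comp hw (i := k) (j := k+3) (by omega) (by omega)
          (by simp [Nat.dist]) (by omega) with h' | h'
        · have hlt : y (k+2) < y (k+3) := h1.trans h'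
          have hadj := walk_adj hw (i := k+2) (j := k+3) (by omega) (by omega) (by simp [Nat.dist])
          exact (incGraph_adj.1 hadj).1 hlt.le
        · have hlt : y (k+1) < y k := hc.trans h'
          have hadj := walk_adj hw (i := k) (j := k+1) (by omega) (by omega) (by simp [Nat.dist])
          exact (incGraph_adj.1 hadj).2 hlt.le
      · exact hc
  intro i j hij
  induction j, hij using Nat.le_induction with
  | base => intro h2L; exact consec i h2L
  | succ j hj ih =>
    intro hjL
    have h1 : y j < y i := ih (by omega)
    rcases walk_comp hw (i := i) (j := j+1) (by omega) (by omega)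
      (by simp [Nat.dist]; omega) (by omega) with hc | hc
    · exfalso
      have hlt : y j < y (j+1) := h1.trans hc
      have hadj := walk_adj hw (i := j) (j := j+1) (by omega) (by omega) (by simp [Nat.dist])
      exact (incGraph_adj.1 hadj).1 hlt.le
    · exact hc

lemma exists_oriented {U : Set α} {L : ℕ} {y : ℕ → α} (hw : IsWalk U L y) :
    ∃ z, IsWalk U L z ∧ Oriented L z := by
  by_cases hL : 2 ≤ L
  · rcases walk_comp hw (i := 0) (j := 2) (by omega) hL (by simp [Nat.dist]) (by omega) with h | h
    · exact ⟨y, hw, fwd hw h hL⟩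
    · have anti := fwd' hw h hL
      refine ⟨fun i => y (L - i), isWalk_reverse hw, fun i j hij hjL => ?_⟩
      exact anti (L - j) (L - i) (by omega) (by omega)
  · exact ⟨y, hw, fun i j hij hjL => absurd (hij.trans hjL) (by omega)⟩

lemma trisect {U : Set α} {L : ℕ} {z : ℕ → α} (hw : IsWalk U L z) (ho : Oriented L z)
    (v : α) {s d : ℕ} (h : s + (3*d+8) ≤ L) :
    ∃ s', s ≤ s' ∧ s' + d ≤ s + (3*d+8) ∧
      ((∀ i, i ≤ d → z (s'+i) < v) ∨ (∀ i, i ≤ d → v < z (s'+i)) ∨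
        (∀ i, i ≤ d → (incGraph α).Adj (z (s'+i)) v)) := by
  by_cases h1 : z (s+d+2) ≤ v
  · exact ⟨s, le_rfl, by omega, Or.inl fun i hi =>
      lt_of_lt_of_le (ho (s+i) (s+d+2) (by omega) (by omega)) h1⟩
  by_cases h2 : v ≤ z (s+2*d+6)
  · exact ⟨s+2*d+8, by omega, by omega, Or.inr (Or.inl fun i hi =>
      lt_of_le_of_lt h2 (ho (s+2*d+6) (s+2*d+8+i) (by omega) (by omega)))⟩
  · refine ⟨s+d+4, by omega, by omega, Or.inr (Or.inr fun i hi => ?_)⟩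
    rw [incGraph_adj]
    constructor
    · intro hle
      exact h1 ((ho (s+d+2) (s+d+4+i) (by omega) (by omega)).le.trans hle)
    · intro hle
      exact h2 (hle.trans (ho (s+d+4+i) (s+2*d+6) (by omega) (by omega)).le)
lemma unb_adj_or_above_below {U : Set α} (hU : Unb U) (a : α) :
    Unb {u ∈ U | (incGraph α).Adj u a} ∨ Unb {u ∈ U | a < u} ∨ Unb {u ∈ U | u < a} := by
  by_cases hAb : Unb {u ∈ U | a < u}
  · exact Or.inr (Or.inl hAb)
  by_cases hBe : Unb {u ∈ U | u < a}
  · exact Or.inr (Or.inr hBe)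
  left
  obtain ⟨B1, hB1⟩ := not_unb hAb
  obtain ⟨B2, hB2⟩ := not_unb hBe
  intro n
  set D := n + B1 + B2 with hD
  obtain ⟨y, hy⟩ := hU (3*D+8)
  obtain ⟨z, hz, ho⟩ := exists_oriented hy
  obtain ⟨s', _, hs2, hcase⟩ := trisect hz ho a (s := 0) (d := D) (by omega)
  have hwb : IsWalk U D (fun i => z (s' + i)) := isWalk_restrict hz (by omega)
  rcases hcase with hc | hc | hc
  · exact absurd (⟨fun i hi => ⟨hwb.1 i hi, hc i hi⟩, hwb.2.1, hwb.2.2⟩ :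
      IsWalk {u ∈ U | u < a} D _) (hB2 D (by omega) _)
  · exact absurd (⟨fun i hi => ⟨hwb.1 i hi, hc i hi⟩, hwb.2.1, hwb.2.2⟩ :
      IsWalk {u ∈ U | a < u} D _) (hB1 D (by omega) _)
  · have hwb2 : IsWalk {u ∈ U | (incGraph α).Adj u a} D (fun i => z (s' + i)) :=
      ⟨fun i hi => ⟨hwb.1 i hi, hc i hi⟩, hwb.2.1, hwb.2.2⟩
    exact ⟨_, isWalk_restrict hwb2 (s := 0) (by omega)⟩

lemma lemma3list : ∀ (F : List α) (U : Set α), Unb U →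
    (∃ a ∈ F, Unb {u ∈ U | a < u} ∨ Unb {u ∈ U | u < a}) ∨
      Unb {u ∈ U | ∀ a ∈ F, (incGraph α).Adj u a} := by
  intro F
  induction F with
  | nil =>
    intro U hU
    exact Or.inr (unb_mono (fun u hu => ⟨hu, by simp⟩) hU)
  | cons a F ih =>
    intro U hU
    rcases unb_adj_or_above_below hU a with h | h | h
    · rcases ih {u ∈ U | (incGraph α).Adj u a} h with ⟨b, hb, hbc⟩ | h'
      · refine Or.inl ⟨b, List.mem_cons_of_mem _ hb, ?_⟩
        exact hbc.imp (unb_mono (fun u hu => ⟨hu.1.1, hu.2⟩))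
          (unb_mono (fun u hu => ⟨hu.1.1, hu.2⟩))
      · refine Or.inr (unb_mono (fun u hu => ⟨hu.1.1, ?_⟩) h')
        intro c hc
        rcases List.mem_cons.1 hc with rfl | hc
        · exact hu.1.2
        · exact hu.2 c hc
    · exact Or.inl ⟨a, List.mem_cons_self, Or.inl h⟩
    · exact Or.inl ⟨a, List.mem_cons_self, Or.inr h⟩
/-- The main step lemma. -/
lemma step {U : Set α} (hU : Unb U) (n : ℕ) :
    ∃ (x : Fin (n+1) → α) (U' : Set α),
      (∀ i, x i ∈ U) ∧ U' ⊆ U ∧ Unb U' ∧ Function.Injective x ∧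
      (∀ i j : Fin (n+1), (incGraph α).Adj (x i) (x j) ↔ Nat.dist i.val j.val = 1) ∧
      ((∀ i, ∀ u ∈ U', (incGraph α).Adj (x i) u) ∨
        (∀ i, ∀ u ∈ U', ¬ (incGraph α).Adj (x i) u ∧ x i ≠ u)) := by
  obtain ⟨y, hy⟩ := hU (3*n+4)
  obtain ⟨z, hz, ho⟩ := exists_oriented hy
  set F : List α := (List.range (n+1)).map (fun i => z (n+2+i)) with hF
  rcases lemma3list F U hU with ⟨a, ha, hc⟩ | h
  · obtain ⟨i0, hi0n, rfl⟩ : ∃ i0, i0 < n+1 ∧ z (n+2+i0) = a := by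
      simpa [hF, List.mem_map, List.mem_range] using ha
    rcases hc with hAb | hBe
    · -- everything in U' is above z (n+2+i0); use block [0,n]
      refine ⟨fun i => z i.val, {u ∈ U | z (n+2+i0) < u}, ?_, fun u hu => hu.1, hAb, ?_, ?_,
        Or.inr ?_⟩
      · intro i; exact hz.1 i.val (by have := i.isLt; omega)
      · intro i j he
        exact Fin.ext (hz.2.1 i.val j.val (by have := i.isLt; omega) (by have := j.isLt; omega) he)
      · intro i j
        exact hz.2.2 i.val j.val (by have := i.isLt; omega) (by have := j.isLt; omega)
      · intro i u hu
        have hlt : z i.val < u :=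
          (ho i.val (n+2+i0) (by have := i.isLt; omega) (by omega)).trans hu.2
        exact ⟨fun hadj => (incGraph_adj.1 hadj).1 hlt.le, hlt.ne⟩
    · -- everything in U' is below z (n+2+i0); use block [2n+4, 3n+4]
      refine ⟨fun i => z (2*n+4+i.val), {u ∈ U | u < z (n+2+i0)}, ?_, fun u hu => hu.1, hBe, ?_,
        ?_, Or.inr ?_⟩
      · intro i; exact hz.1 _ (by have := i.isLt; omega)
      · intro i j he
        have := hz.2.1 (2*n+4+i.val) (2*n+4+j.val) (by have := i.isLt; omega)
          (by have := j.isLt; omega) he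
        exact Fin.ext (by omega)
      · intro i j
        have hd : Nat.dist (2*n+4+i.val) (2*n+4+j.val) = Nat.dist i.val j.val := by
          simp [Nat.dist]; omega
        rw [hz.2.2 (2*n+4+i.val) (2*n+4+j.val) (by have := i.isLt; omega)
          (by have := j.isLt; omega), hd]
      · intro i u hu
        have hlt : u < z (2*n+4+i.val) :=
          hu.2.trans (ho (n+2+i0) (2*n+4+i.val) (by omega) (by have := i.isLt; omega))
        exact ⟨fun hadj => (incGraph_adj.1 hadj).2 hlt.le, hlt.ne'⟩
  · -- middle block [n+2, 2n+2], fully adjacent to U'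
    refine ⟨fun i => z (n+2+i.val), {u ∈ U | ∀ a ∈ F, (incGraph α).Adj u a}, ?_,
      fun u hu => hu.1, h, ?_, ?_, Or.inl ?_⟩
    · intro i; exact hz.1 _ (by have := i.isLt; omega)
    · intro i j he
      have := hz.2.1 (n+2+i.val) (n+2+j.val) (by have := i.isLt; omega)
        (by have := j.isLt; omega) he
      exact Fin.ext (by omega)
    · intro i j
      have hd : Nat.dist (n+2+i.val) (n+2+j.val) = Nat.dist i.val j.val := by
        simp [Nat.dist]; omega
      rw [hz.2.2 (n+2+i.val) (n+2+j.val) (by have := i.isLt; omega)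
        (by have := j.isLt; omega), hd]
    · intro i u hu
      have hmem : z (n+2+i.val) ∈ F := by
        rw [hF]
        exact List.mem_map.2 ⟨i.val, List.mem_range.2 i.isLt, rfl⟩
      exact (hu.2 _ hmem).symm
end IncAux

open IncAux in
theorem incomparabilityGraph_embeds_direct_or_complete_sum_of_paths
    {α : Type*} [PartialOrder α]
    (h : ∀ n : ℕ, ∃ x : Fin (n + 1) → α, IsInducedPath (incGraph α) x) :
    EmbedsDirectSumOfPaths (incGraph α) ∨ EmbedsCompleteSumOfPaths (incGraph α) := by
  classical
  have h0 : Unb (Set.univ : Set α) := by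
    intro n
    obtain ⟨x, hxinj, hxadj⟩ := h n
    refine ⟨fun i => x ⟨min i n, by omega⟩, fun _ _ => trivial, ?_, ?_⟩
    · intro i j hi hj he
      have h3 : min i n = min j n := congrArg Fin.val (hxinj he)
      omega
    · intro i j hi hj
      have := hxadj ⟨min i n, by omega⟩ ⟨min j n, by omega⟩
      simpa [Nat.min_eq_left hi, Nat.min_eq_left hj] using this
  let Ch : ℕ → {U : Set α // Unb U} := fun k => Nat.rec ⟨Set.univ, h0⟩
    (fun k p => ⟨(step p.2 k).choose_spec.choose,
      ((step p.2 k).choose_spec.choose_spec).2.2.1⟩) k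
  let X : ∀ k, Fin (k+1) → α := fun k => (step (Ch k).2 k).choose
  have S : ∀ k, (∀ i, X k i ∈ (Ch k).1) ∧ (Ch (k+1)).1 ⊆ (Ch k).1 ∧ Unb (Ch (k+1)).1 ∧
      Function.Injective (X k) ∧
      (∀ i j : Fin (k+1), (incGraph α).Adj (X k i) (X k j) ↔ Nat.dist i.val j.val = 1) ∧
      ((∀ i, ∀ u ∈ (Ch (k+1)).1, (incGraph α).Adj (X k i) u) ∨
        (∀ i, ∀ u ∈ (Ch (k+1)).1, ¬ (incGraph α).Adj (X k i) u ∧ X k i ≠ u)) :=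
    fun k => (step (Ch k).2 k).choose_spec.choose_spec
  have hchain : ∀ k l, k ≤ l → (Ch l).1 ⊆ (Ch k).1 := by
    intro k l hkl
    induction l, hkl using Nat.le_induction with
    | base => exact subset_rfl
    | succ l hl ih => exact Set.Subset.trans ((S l).2.1) ih
  let T : Set ℕ := {k | ∀ (i : Fin (k+1)), ∀ u ∈ (Ch (k+1)).1, (incGraph α).Adj (X k i) u}
  have cross : ∀ k l, k < l → ∀ (i : Fin (k+1)) (j : Fin (l+1)),
      (k ∈ T → (incGraph α).Adj (X k i) (X l j)) ∧
      (k ∉ T → ¬ (incGraph α).Adj (X k i) (X l j) ∧ X k i ≠ X l j) := by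
    intro k l hkl i j
    have hm : X l j ∈ (Ch (k+1)).1 := hchain (k+1) l hkl ((S l).1 j)
    constructor
    · intro hk; exact hk i _ hm
    · intro hk
      rcases (S k).2.2.2.2.2 with hc | hc
      · exact absurd hc hk
      · exact hc i _ hm
  by_cases hinfT : T.Infinite
  · right
    have hmono : StrictMono (Nat.nth (· ∈ T)) := Nat.nth_strictMono hinfT
    have htag : ∀ m, Nat.nth (· ∈ T) m ∈ T := fun m => Nat.nth_mem_of_infinite hinfT m
    set e : ℕ → ℕ := Nat.nth (· ∈ T) with he
    refine ⟨fun i => Set.range (X (e i)), fun i => Set.finite_range _, ?_, ?_, ?_⟩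
    · intro m n hmn
      rw [Set.disjoint_left]
      rintro v ⟨i, rfl⟩ ⟨j, hj⟩
      rcases hmn.lt_or_gt with hlt | hlt
      · have := (cross (e m) (e n) (hmono hlt) i j).1 (htag m)
        rw [hj] at this
        exact (incGraph α).loopless.irrefl _ this
      · have := (cross (e n) (e m) (hmono hlt) j i).1 (htag n)
        rw [hj] at this
        exact (incGraph α).loopless.irrefl _ this
    · intro m n hmn x hx y hy
      obtain ⟨i, rfl⟩ := hx
      obtain ⟨j, rfl⟩ := hy
      rcases hmn.lt_or_gt with hlt | hlt
      · exact (cross (e m) (e n) (hmono hlt) i j).1 (htag m)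
      · exact ((cross (e n) (e m) (hmono hlt) j i).1 (htag n)).symm
    · intro n
      exact ⟨e n, hmono.le_apply, X (e n), (S (e n)).2.2.2.1, rfl, (S (e n)).2.2.2.2.1⟩
  · left
    have hinfC : {k | k ∉ T}.Infinite := by
      have := Set.Finite.infinite_compl (Set.not_infinite.1 hinfT)
      exact this
    have hmono : StrictMono (Nat.nth (· ∉ T)) := Nat.nth_strictMono hinfC
    have htag : ∀ m, Nat.nth (· ∉ T) m ∉ T := fun m => Nat.nth_mem_of_infinite hinfC m
    set e : ℕ → ℕ := Nat.nth (· ∉ T) with he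
    refine ⟨fun i => Set.range (X (e i)), fun i => Set.finite_range _, ?_, ?_, ?_⟩
    · intro m n hmn
      rw [Set.disjoint_left]
      rintro v ⟨i, rfl⟩ ⟨j, hj⟩
      rcases hmn.lt_or_gt with hlt | hlt
      · have := ((cross (e m) (e n) (hmono hlt) i j).2 (htag m)).2
        exact this hj.symm
      · have := ((cross (e n) (e m) (hmono hlt) j i).2 (htag n)).2
        exact this hj
    · intro m n hmn x hx y hy
      obtain ⟨i, rfl⟩ := hx
      obtain ⟨j, rfl⟩ := hy
      rcases hmn.lt_or_gt with hlt | hlt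
      · exact ((cross (e m) (e n) (hmono hlt) i j).2 (htag m)).1
      · intro hadj
        exact ((cross (e n) (e m) (hmono hlt) j i).2 (htag n)).1 hadj.symm
    · intro n
      exact ⟨e n, hmono.le_apply, X (e n), (S (e n)).2.2.2.1, rfl, (S (e n)).2.2.2.2.1⟩
end

section
/- Let A be a finite nonempty alphabet and u : ℕ → A a word. Then u is uniformly recurrent if and only if fac(u) is inexhaustible and fac(u) contains no infinite antichain with respect to the factor (infix) order. -/
open SimpleGraph

namespace URAux

variable {A : Type*} (u : ℕ → A)

/-- The window of `u` of length `n` starting at `p`. -/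
def win (p n : ℕ) : List A := (List.range n).map fun i => u (p + i)

variable {u}

@[simp] lemma win_length (p n : ℕ) : (win u p n).length = n := by simp [win]

lemma win_add (p m n : ℕ) : win u p (m + n) = win u p m ++ win u (p + m) n := by
  simp only [win, List.range_add, List.map_append, List.map_map]
  congr 1
  apply List.map_congr_left
  intro i _
  simp only [Function.comp]
  congr 1
  omega

lemma win_add3 (p a b c : ℕ) :
    win u p (a + b + c) = win u p a ++ win u (p + a) b ++ win u (p + a + b) c := by
  rw [win_add p (a + b) c, win_add p a b, Nat.add_assoc]

lemma isFactor_win (p n : ℕ) : IsFactor u (win u p n) :=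
  ⟨p, by rw [win_length]; rfl⟩

lemma isFactor_iff_win {w : List A} : IsFactor u w ↔ ∃ p, w = win u p w.length := Iff.rfl

lemma win_eq_iff {p q n : ℕ} : win u p n = win u q n ↔ ∀ i < n, u (p + i) = u (q + i) := by
  constructor
  · intro h i hi
    have := congrArg (fun l => l[i]?) h
    simp [win, hi] at this
    exact this
  · intro h
    simp only [win]
    apply List.map_congr_left
    intro i hi
    exact h i (List.mem_range.mp hi)

lemma infix_win {v : List A} {q m : ℕ} (h : v <:+: win u q m) :
    ∃ r, q ≤ r ∧ r + v.length ≤ q + m ∧ v = win u r v.length := by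
  obtain ⟨s, t, hst⟩ := h
  have hlen : s.length + v.length + t.length = m := by
    have := congrArg List.length hst
    simp at this; omega
  refine ⟨q + s.length, Nat.le_add_right _ _, by omega, ?_⟩
  have hdec : win u q m = win u q s.length ++ win u (q + s.length) v.length ++
      win u (q + s.length + v.length) t.length := by
    conv_lhs => rw [← hlen]
    exact win_add3 _ _ _ _
  rw [hdec] at hst
  have h1 := List.append_inj hst (by simp)
  have h2 := List.append_inj h1.1 (by simp)
  exact h2.2

lemma win_infix {q m r k : ℕ} (h1 : q ≤ r) (h2 : r + k ≤ q + m) :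
    win u r k <:+: win u q m := by
  refine ⟨win u q (r - q), win u (r + k) (q + m - (r + k)), ?_⟩
  have e1 : m = (r - q) + k + (q + m - (r + k)) := by omega
  have e2 : q + (r - q) = r := by omega
  conv_rhs => rw [e1, win_add3, e2]

lemma isFactor_of_infix {v w : List A} (h : v <:+: w) (hw : IsFactor u w) : IsFactor u v := by
  obtain ⟨p, hp⟩ := hw
  rw [show ((List.range w.length).map fun i => u (p + i)) = win u p w.length from rfl] at hp
  rw [hp] at h
  obtain ⟨r, _, _, hv⟩ := infix_win h
  exact hv ▸ isFactor_win r v.length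

/-- a sub-segment of equal windows is equal -/
lemma win_eq_seg {r a L d k : ℕ} (h : win u r L = win u a L) (hd : d + k ≤ L) :
    win u (r + d) k = win u (a + d) k := by
  rw [win_eq_iff] at h ⊢
  intro i hi
  have := h (d + i) (by omega)
  simpa [Nat.add_assoc] using this

lemma append3_win {x y z : List A} {a L : ℕ} (h : x ++ y ++ z = win u a L) :
    x = win u a x.length ∧ y = win u (a + x.length) y.length ∧
      z = win u (a + x.length + y.length) z.length := by
  have hL : x.length + y.length + z.length = L := by
    have := congrArg List.length h; simp at this; omega
  rw [← hL, win_add3] at h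
  have h1 := List.append_inj h (by simp)
  have h2 := List.append_inj h1.1 (by simp)
  exact ⟨h2.1, h2.2, h1.2⟩

end URAux
open URAux in
lemma URAux.fwd_inexh {A : Type*} (u : ℕ → A) (h : UniformlyRecurrent u) :
    Inexhaustible u := by
  intro v v' hv hv'
  obtain ⟨m', hm'⟩ := h v'.length
  obtain ⟨m, hm⟩ := h v.length
  have h1 : v' <:+: win u m m' :=
    hm' v' (win u m m') hv' (isFactor_win _ _) rfl (win_length _ _)
  obtain ⟨q', hq'1, hq'2, hq'3⟩ := infix_win h1
  have h2 : v <:+: win u (q' - m) m :=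
    hm v _ hv (isFactor_win _ _) rfl (win_length _ _)
  obtain ⟨p, hp1, hp2, hp3⟩ := infix_win h2
  have hpq : p + v.length ≤ q' := by omega
  refine ⟨win u (p + v.length) (q' - (p + v.length)), ?_⟩
  have hcat : v ++ win u (p + v.length) (q' - (p + v.length)) ++ v' =
      win u p (v.length + (q' - (p + v.length)) + v'.length) := by
    rw [win_add3]
    rw [show p + v.length + (q' - (p + v.length)) = q' by omega]
    rw [← hp3, ← hq'3]
  rw [hcat]
  exact isFactor_win _ _

open URAux in
lemma URAux.fwd_noanti {A : Type*} [Fintype A] (u : ℕ → A) (h : UniformlyRecurrent u)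
    (f : ℕ → List A) (hf : ∀ i, IsFactor u (f i))
    (ha : ∀ i j, i ≠ j → ¬ f i <:+: f j) : False := by
  obtain ⟨m, hm⟩ := h (f 0).length
  have hinj : Function.Injective f := by
    intro i j hij
    by_contra hne
    exact ha i j hne (hij ▸ List.infix_refl _)
  have hbig : ¬ ∀ j : ℕ, (f (j + 1)).length < m := by
    intro hall
    have hinf : ({l : List A | l.length < m}).Infinite :=
      Set.infinite_of_injective_forall_mem
        (f := fun j : ℕ => f (j + 1))
        (fun a b hab => by simpa using hinj hab)
        (fun a => hall a)
    exact hinf (List.finite_length_lt A m)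
  push_neg at hbig
  obtain ⟨j, hjm⟩ := hbig
  obtain ⟨p, hp⟩ := hf (j + 1)
  have hw : f (j + 1) = win u p (f (j + 1)).length := hp
  have hpre : win u p m <:+: f (j + 1) := by
    rw [hw]; exact win_infix (le_refl p) (by omega)
  have hfx : f 0 <:+: win u p m :=
    hm (f 0) (win u p m) (hf 0) (isFactor_win _ _) rfl (win_length _ _)
  exact ha 0 (j + 1) (by omega) (hfx.trans hpre)

open URAux in
lemma URAux.bwd {A : Type*} [Fintype A] (u : ℕ → A)
    (hinex : Inexhaustible u)
    (hna : ¬ ∃ f : ℕ → List A, (∀ i, IsFactor u (f i)) ∧ ∀ i j, i ≠ j → ¬ f i <:+: f j) :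
    UniformlyRecurrent u := by
  classical
  by_contra hur
  rw [UniformlyRecurrent] at hur
  push_neg at hur
  obtain ⟨n, hn⟩ := hur
  choose v w hv hw hvl hwl hnot using hn
  have hn1 : 1 ≤ n := by
    rcases Nat.eq_zero_or_pos n with h0 | h
    · exfalso
      have hv0 : v 0 = [] := List.length_eq_zero_iff.mp (by rw [hvl 0, h0])
      exact hnot 0 (hv0 ▸ List.nil_infix)
    · exact h
  have hv' : ∀ m, ∃ p, v m = win u p n := by
    intro m
    obtain ⟨p, hp⟩ := hv m
    have h2 : v m = win u p (v m).length := hp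
    rw [hvl m] at h2
    exact ⟨p, h2⟩
  choose pos hpos using hv'
  have hw' : ∀ m, ∃ q, w m = win u q m := by
    intro m
    obtain ⟨q, hq⟩ := hw m
    have h2 : w m = win u q (w m).length := hq
    rw [hwl m] at h2
    exact ⟨q, h2⟩
  choose qos hqos using hw'
  obtain ⟨y, hy⟩ := Finite.exists_infinite_fiber (fun m (i : Fin n) => u (pos m + i))
  have hyinf : ((fun m (i : Fin n) => u (pos m + i)) ⁻¹' {y}).Infinite :=
    Set.infinite_coe_iff.mp hy
  obtain ⟨m₀, hm₀⟩ := hyinf.nonempty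
  set V := v m₀ with hVdef
  have hVwin : V = win u (pos m₀) n := hpos m₀
  have hVfac : IsFactor u V := hv m₀
  have hVl : V.length = n := hvl m₀
  have hm₀' : (fun i : Fin n => u (pos m₀ + i)) = y := hm₀
  have hsame : ∀ m, (fun i : Fin n => u (pos m + i)) = y → v m = V := by
    intro m hm
    rw [hpos m, hVwin, win_eq_iff]
    intro i hi
    exact congrFun (hm.trans hm₀'.symm) ⟨i, hi⟩
  have hfree : ∀ m, ∃ q, ¬ V <:+: win u q m := by
    intro m
    obtain ⟨m', hm'mem, hm'gt⟩ := hyinf.exists_gt m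
    refine ⟨qos m', fun hcon => ?_⟩
    apply hnot m'
    rw [hsame m' hm'mem, hqos m']
    exact hcon.trans (win_infix (le_refl _) (by omega))
  -- key construction
  have key : ∀ L, ∃ a d, L < d ∧ n ≤ d ∧ V = win u a n ∧ V = win u (a + d) n ∧
      ∀ s, a ≤ s → s ≤ a + d → V = win u s n → s = a ∨ s = a + d := by
    intro L
    set K := L + n with hK
    obtain ⟨q, hq⟩ := hfree (n + K)
    obtain ⟨w₁, hw₁⟩ := hinex V (win u q (n + K)) hVfac (isFactor_win _ _)
    obtain ⟨a₀, ha₀⟩ := hw₁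
    have ha₀' : V ++ w₁ ++ win u q (n + K) =
        win u a₀ (V ++ w₁ ++ win u q (n + K)).length := ha₀
    obtain ⟨hx, -, hz⟩ := append3_win ha₀'
    rw [hVl] at hx
    rw [win_length, hVl] at hz
    set b := a₀ + n + w₁.length with hb
    set P : ℕ → Prop := fun t => a₀ ≤ t ∧ V = win u t n with hP
    set p := Nat.findGreatest P b with hpdef
    have hPp : P p := Nat.findGreatest_spec (m := a₀) (by omega) ⟨le_refl _, hx⟩
    have hpb : p ≤ b := Nat.findGreatest_le b
    have ha₀p : a₀ ≤ p := hPp.1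
    have hnocc : ∀ t, p < t → t + n ≤ p + n + K → V ≠ win u t n := by
      intro t ht1 ht2 hcon
      by_cases htb : t ≤ b
      · exact Nat.findGreatest_is_greatest ht1 htb ⟨by omega, hcon⟩
      · apply hq
        rw [hz, hcon]
        exact win_infix (by omega) (by omega)
    obtain ⟨w₂, hw₂⟩ := hinex (win u p (n + K)) V (isFactor_win _ _) hVfac
    obtain ⟨a, ha⟩ := hw₂
    have ha' : win u p (n + K) ++ w₂ ++ V =
        win u a (win u p (n + K) ++ w₂ ++ V).length := ha
    obtain ⟨hx2, -, hz2⟩ := append3_win ha'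
    rw [win_length] at hx2
    rw [hVl, win_length] at hz2
    set c := a + (n + K) + w₂.length with hc
    have hseg0 : win u p n = win u a n := by
      have := win_eq_seg (d := 0) (k := n) hx2 (by omega)
      simpa using this
    have hVa : V = win u a n := hPp.2.trans hseg0
    have hnocc' : ∀ t, a < t → t + n ≤ a + n + K → V ≠ win u t n := by
      intro t ht1 ht2 hcon
      have hseg : win u (p + (t - a)) n = win u (a + (t - a)) n :=
        win_eq_seg hx2 (by omega)
      exact hnocc (p + (t - a)) (by omega) (by omega)
        (by rw [hseg, show a + (t - a) = t by omega]; exact hcon)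
    have hcV : V = win u c n := hz2
    have hac : a < c := by omega
    have hQex : ∃ t, a < t ∧ V = win u t n := ⟨c, hac, hcV⟩
    set t₁ := Nat.find hQex with ht₁def
    have hQt : a < t₁ ∧ V = win u t₁ n := Nat.find_spec hQex
    have ht₁c : t₁ ≤ c := Nat.find_min' hQex ⟨hac, hcV⟩
    have hmin : ∀ s, s < t₁ → ¬ (a < s ∧ V = win u s n) := fun s hs => Nat.find_min hQex hs
    set d := t₁ - a with hd
    have hKd : K < d := by
      by_contra hcon
      exact hnocc' t₁ hQt.1 (by omega) hQt.2
    refine ⟨a, d, by omega, by omega, hVa, ?_, ?_⟩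
    · rw [show a + d = t₁ by omega]; exact hQt.2
    · intro s hs1 hs2 hsV
      rcases eq_or_lt_of_le hs1 with h | h
      · exact Or.inl h.symm
      · right
        have hts : t₁ ≤ s := by
          by_contra hls
          exact hmin s (by omega) ⟨h, hsV⟩
        omega
  have key' : ∀ L, ∃ ad : ℕ × ℕ, L < ad.2 ∧ n ≤ ad.2 ∧ V = win u ad.1 n ∧
      V = win u (ad.1 + ad.2) n ∧ ∀ s, ad.1 ≤ s → s ≤ ad.1 + ad.2 → V = win u s n →
        s = ad.1 ∨ s = ad.1 + ad.2 := by
    intro L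
    obtain ⟨a, d, h1, h2, h3, h4, h5⟩ := key L
    exact ⟨(a, d), h1, h2, h3, h4, h5⟩
  choose pick hpick1 hpick2 hpick3 hpick4 hpick5 using key'
  set seq : ℕ → ℕ × ℕ := fun k => Nat.rec (pick 0) (fun _ prev => pick prev.2) k with hseq
  have hseqsucc : ∀ k, seq (k + 1) = pick (seq k).2 := fun k => rfl
  have hmono : StrictMono (fun k => (seq k).2) := by
    apply strictMono_nat_of_lt_succ
    intro k
    rw [hseqsucc]
    exact hpick1 _
  have hprop : ∀ k, n ≤ (seq k).2 ∧ V = win u (seq k).1 n ∧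
      V = win u ((seq k).1 + (seq k).2) n ∧
      ∀ s, (seq k).1 ≤ s → s ≤ (seq k).1 + (seq k).2 → V = win u s n →
        s = (seq k).1 ∨ s = (seq k).1 + (seq k).2 := by
    intro k
    cases k with
    | zero => exact ⟨hpick2 0, hpick3 0, hpick4 0, hpick5 0⟩
    | succ k => rw [hseqsucc]; exact ⟨hpick2 _, hpick3 _, hpick4 _, hpick5 _⟩
  apply hna
  refine ⟨fun k => win u (seq k).1 ((seq k).2 + n), fun k => isFactor_win _ _, ?_⟩
  intro i j hij hinf
  obtain ⟨ni, hVi, hVid, hiu⟩ := hprop i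
  obtain ⟨nj, hVj, hVjd, hju⟩ := hprop j
  have hlen : (seq i).2 + n ≤ (seq j).2 + n := by
    have := hinf.length_le
    simpa using this
  have hdij : (seq i).2 < (seq j).2 := by
    rcases (hmono.injective.ne hij).lt_or_gt with h | h
    · exact h
    · omega
  obtain ⟨r, hr1, hr2, hr3⟩ := infix_win hinf
  rw [win_length] at hr2 hr3
  have hVr : V = win u r n := by
    have := win_eq_seg (d := 0) (k := n) hr3 (by omega)
    simpa using hVi.trans this
  have hVrd : V = win u (r + (seq i).2) n := by
    have := win_eq_seg (d := (seq i).2) (k := n) hr3 (le_refl _)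
    exact hVid.trans this
  have h1 := hju r hr1 (by omega) hVr
  have h2 := hju (r + (seq i).2) (by omega) (by omega) hVrd
  omega

theorem uniformlyRecurrent_iff_inexhaustible_and_no_infinite_antichain
    {A : Type*} [Fintype A] [Nonempty A] (u : ℕ → A) :
    UniformlyRecurrent u ↔
      (Inexhaustible u ∧
        ¬ ∃ f : ℕ → List A, (∀ i, IsFactor u (f i)) ∧
            ∀ i j, i ≠ j → ¬ f i <:+: f j) := by
  constructor
  · intro h
    refine ⟨URAux.fwd_inexh u h, ?_⟩
    rintro ⟨f, hf, ha⟩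
    exact URAux.fwd_noanti u h f hf ha
  · rintro ⟨h1, h2⟩
    exact URAux.bwd u h1 h2
end

section
/- Let G be a simple graph such that for every n ∈ ℕ the graph G contains a clique with n vertices. Then either G contains an infinite clique, or there is a family (A_n)_{n ∈ ℕ} of pairwise disjoint finite subsets of the vertex set of G, with no edge of G between distinct A_n, such that each A_n is a clique of G with at least n vertices. -/
open SimpleGraph

attribute [local instance] Classical.decEq Classical.propDecidable

section Aux
variable {V : Type*}

/-- common neighborhood of a finite set. -/
private def CNset (G : SimpleGraph V) (S : Finset V) : Set V := {x | ∀ v ∈ S, G.Adj v x}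

private def GoodS (G : SimpleGraph V) (S : Finset V) : Prop :=
  G.IsClique ↑S ∧ ∀ n, ∃ t : Finset V, t.card = n ∧ G.IsClique ↑t ∧ ↑t ⊆ CNset G S

private noncomputable def chainA (G : SimpleGraph V)
    (hA : ∀ S, GoodS G S → ∃ v, v ∈ CNset G S ∧ GoodS G (insert v S))
    (h0 : GoodS G ∅) : ℕ → {S : Finset V // GoodS G S}
  | 0 => ⟨∅, h0⟩
  | n+1 =>
    let p := chainA G hA h0 n
    ⟨insert (Classical.choose (hA p.1 p.2)) p.1, (Classical.choose_spec (hA p.1 p.2)).2⟩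

private noncomputable def vseq (G : SimpleGraph V)
    (hA : ∀ S, GoodS G S → ∃ v, v ∈ CNset G S ∧ GoodS G (insert v S))
    (h0 : GoodS G ∅) (n : ℕ) : V :=
  Classical.choose (hA (chainA G hA h0 n).1 (chainA G hA h0 n).2)

private lemma vseq_mem_CN (G : SimpleGraph V)
    (hA : ∀ S, GoodS G S → ∃ v, v ∈ CNset G S ∧ GoodS G (insert v S))
    (h0 : GoodS G ∅) (n : ℕ) :
    vseq G hA h0 n ∈ CNset G (chainA G hA h0 n).1 :=
  (Classical.choose_spec (hA (chainA G hA h0 n).1 (chainA G hA h0 n).2)).1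

private lemma chainA_succ (G : SimpleGraph V)
    (hA : ∀ S, GoodS G S → ∃ v, v ∈ CNset G S ∧ GoodS G (insert v S))
    (h0 : GoodS G ∅) (n : ℕ) :
    (chainA G hA h0 (n+1)).1 = insert (vseq G hA h0 n) (chainA G hA h0 n).1 := rfl

private lemma vseq_mem_chainA (G : SimpleGraph V)
    (hA : ∀ S, GoodS G S → ∃ v, v ∈ CNset G S ∧ GoodS G (insert v S))
    (h0 : GoodS G ∅) {m n : ℕ} (hmn : m < n) :
    vseq G hA h0 m ∈ (chainA G hA h0 n).1 := by
  induction n with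
  | zero => omega
  | succ n ih =>
    rw [chainA_succ]
    rcases Nat.lt_succ_iff_lt_or_eq.mp hmn with hlt | rfl
    · exact Finset.mem_insert_of_mem (ih hlt)
    · exact Finset.mem_insert_self _ _

private lemma vseq_adj (G : SimpleGraph V)
    (hA : ∀ S, GoodS G S → ∃ v, v ∈ CNset G S ∧ GoodS G (insert v S))
    (h0 : GoodS G ∅) {m n : ℕ} (hmn : m < n) :
    G.Adj (vseq G hA h0 m) (vseq G hA h0 n) :=
  vseq_mem_CN G hA h0 n _ (vseq_mem_chainA G hA h0 hmn)

private lemma exists_avoid (G : SimpleGraph V) (S₀ : Finset V)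
    (hbig : ∀ n, ∃ t : Finset V, t.card = n ∧ G.IsClique ↑t ∧ ↑t ⊆ CNset G S₀)
    (hbd : ∀ v ∈ CNset G S₀, ∃ N : ℕ, ∀ t : Finset V, G.IsClique ↑t → ↑t ⊆ CNset G S₀ →
      (∀ x ∈ t, G.Adj v x) → t.card < N)
    (F : Finset V) (hF : ↑F ⊆ CNset G S₀) (n : ℕ) :
    ∃ t : Finset V, n ≤ t.card ∧ G.IsClique ↑t ∧ ↑t ⊆ CNset G S₀ ∧
      ∀ x ∈ t, ∀ v ∈ F, ¬ G.Adj v x ∧ x ≠ v := by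
  classical
  choose! N hN using hbd
  obtain ⟨s, hscard, hsclique, hsCN⟩ := hbig (n + ∑ v ∈ F, (N v + 1))
  set P : V → Prop := fun x => ∀ v ∈ F, ¬ G.Adj v x ∧ x ≠ v with hP
  refine ⟨s.filter P, ?_, hsclique.subset (by exact_mod_cast Finset.filter_subset _ _), ?_, ?_⟩
  · have hsplit := Finset.card_filter_add_card_filter_not (s := s) (p := P)
    have hbad : (s.filter (fun x => ¬ P x)).card ≤ ∑ v ∈ F, (N v + 1) := by
      have hsub : s.filter (fun x => ¬ P x) ⊆
          F.biUnion (fun v => insert v (s.filter (fun x => G.Adj v x))) := by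
        intro x hx
        rw [Finset.mem_filter] at hx
        obtain ⟨hxs, hx2⟩ := hx
        have hv : ∃ v ∈ F, G.Adj v x ∨ x = v := by
          by_contra hc
          push_neg at hc
          refine hx2 ?_
          rw [hP]
          exact fun v hvF => ⟨(hc v hvF).1, (hc v hvF).2⟩
        obtain ⟨v, hvF, hv⟩ := hv
        rw [Finset.mem_biUnion]
        refine ⟨v, hvF, ?_⟩
        rcases hv with hadj | rfl
        · exact Finset.mem_insert_of_mem (Finset.mem_filter.mpr ⟨hxs, hadj⟩)
        · exact Finset.mem_insert_self _ _
      calc (s.filter (fun x => ¬ P x)).card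
          ≤ (F.biUnion (fun v => insert v (s.filter (fun x => G.Adj v x)))).card :=
            Finset.card_le_card hsub
        _ ≤ ∑ v ∈ F, (insert v (s.filter (fun x => G.Adj v x))).card :=
            Finset.card_biUnion_le
        _ ≤ ∑ v ∈ F, (N v + 1) := by
            apply Finset.sum_le_sum
            intro v hvF
            have hlt : (s.filter (fun x => G.Adj v x)).card < N v := by
              apply hN v (hF hvF)
              · exact hsclique.subset (by exact_mod_cast Finset.filter_subset _ _)
              · exact fun x hx => hsCN (by exact_mod_cast Finset.filter_subset _ _ hx)
              · intro x hx; exact (Finset.mem_filter.mp hx).2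
            calc (insert v (s.filter (fun x => G.Adj v x))).card
                ≤ (s.filter (fun x => G.Adj v x)).card + 1 := Finset.card_insert_le _ _
              _ ≤ N v + 1 := by omega
    omega
  · exact fun x hx => hsCN (by exact_mod_cast Finset.filter_subset _ _ hx)
  · intro x hx; exact (Finset.mem_filter.mp hx).2

private noncomputable def chainB (G : SimpleGraph V) (S₀ : Finset V)
    (hbig : ∀ n, ∃ t : Finset V, t.card = n ∧ G.IsClique ↑t ∧ ↑t ⊆ CNset G S₀)
    (hbd : ∀ v ∈ CNset G S₀, ∃ N : ℕ, ∀ t : Finset V, G.IsClique ↑t → ↑t ⊆ CNset G S₀ →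
      (∀ x ∈ t, G.Adj v x) → t.card < N) : ℕ → {F : Finset V // ↑F ⊆ CNset G S₀}
  | 0 => ⟨∅, by simp⟩
  | n+1 =>
    let p := chainB G S₀ hbig hbd n
    let spec := Classical.choose_spec (exists_avoid G S₀ hbig hbd p.1 p.2 n)
    ⟨p.1 ∪ Classical.choose (exists_avoid G S₀ hbig hbd p.1 p.2 n), by
      rw [Finset.coe_union]
      exact Set.union_subset p.2 spec.2.2.1⟩

private noncomputable def Aseq (G : SimpleGraph V) (S₀ : Finset V)
    (hbig : ∀ n, ∃ t : Finset V, t.card = n ∧ G.IsClique ↑t ∧ ↑t ⊆ CNset G S₀)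
    (hbd : ∀ v ∈ CNset G S₀, ∃ N : ℕ, ∀ t : Finset V, G.IsClique ↑t → ↑t ⊆ CNset G S₀ →
      (∀ x ∈ t, G.Adj v x) → t.card < N) (n : ℕ) : Finset V :=
  Classical.choose (exists_avoid G S₀ hbig hbd (chainB G S₀ hbig hbd n).1
    (chainB G S₀ hbig hbd n).2 n)

private lemma Aseq_spec (G : SimpleGraph V) (S₀ : Finset V)
    (hbig : ∀ n, ∃ t : Finset V, t.card = n ∧ G.IsClique ↑t ∧ ↑t ⊆ CNset G S₀)
    (hbd : ∀ v ∈ CNset G S₀, ∃ N : ℕ, ∀ t : Finset V, G.IsClique ↑t → ↑t ⊆ CNset G S₀ →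
      (∀ x ∈ t, G.Adj v x) → t.card < N) (n : ℕ) :
    n ≤ (Aseq G S₀ hbig hbd n).card ∧ G.IsClique ↑(Aseq G S₀ hbig hbd n) ∧
      ↑(Aseq G S₀ hbig hbd n) ⊆ CNset G S₀ ∧
      ∀ x ∈ Aseq G S₀ hbig hbd n, ∀ v ∈ (chainB G S₀ hbig hbd n).1,
        ¬ G.Adj v x ∧ x ≠ v :=
  Classical.choose_spec (exists_avoid G S₀ hbig hbd (chainB G S₀ hbig hbd n).1
    (chainB G S₀ hbig hbd n).2 n)

private lemma chainB_succ (G : SimpleGraph V) (S₀ : Finset V)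
    (hbig : ∀ n, ∃ t : Finset V, t.card = n ∧ G.IsClique ↑t ∧ ↑t ⊆ CNset G S₀)
    (hbd : ∀ v ∈ CNset G S₀, ∃ N : ℕ, ∀ t : Finset V, G.IsClique ↑t → ↑t ⊆ CNset G S₀ →
      (∀ x ∈ t, G.Adj v x) → t.card < N) (n : ℕ) :
    (chainB G S₀ hbig hbd (n+1)).1 =
      (chainB G S₀ hbig hbd n).1 ∪ Aseq G S₀ hbig hbd n := rfl

private lemma Aseq_subset_chainB (G : SimpleGraph V) (S₀ : Finset V)
    (hbig : ∀ n, ∃ t : Finset V, t.card = n ∧ G.IsClique ↑t ∧ ↑t ⊆ CNset G S₀)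
    (hbd : ∀ v ∈ CNset G S₀, ∃ N : ℕ, ∀ t : Finset V, G.IsClique ↑t → ↑t ⊆ CNset G S₀ →
      (∀ x ∈ t, G.Adj v x) → t.card < N) {m n : ℕ} (hmn : m < n) :
    Aseq G S₀ hbig hbd m ⊆ (chainB G S₀ hbig hbd n).1 := by
  induction n with
  | zero => omega
  | succ n ih =>
    rw [chainB_succ]
    rcases Nat.lt_succ_iff_lt_or_eq.mp hmn with hlt | rfl
    · exact (ih hlt).trans Finset.subset_union_left
    · exact Finset.subset_union_right

/-- no adjacency and no equality between distinct blocks, for m < n -/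
private lemma Aseq_sep (G : SimpleGraph V) (S₀ : Finset V)
    (hbig : ∀ n, ∃ t : Finset V, t.card = n ∧ G.IsClique ↑t ∧ ↑t ⊆ CNset G S₀)
    (hbd : ∀ v ∈ CNset G S₀, ∃ N : ℕ, ∀ t : Finset V, G.IsClique ↑t → ↑t ⊆ CNset G S₀ →
      (∀ x ∈ t, G.Adj v x) → t.card < N) {m n : ℕ} (hmn : m < n)
    {x y : V} (hx : x ∈ Aseq G S₀ hbig hbd m) (hy : y ∈ Aseq G S₀ hbig hbd n) :
    ¬ G.Adj x y ∧ y ≠ x :=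
  (Aseq_spec G S₀ hbig hbd n).2.2.2 y hy x (Aseq_subset_chainB G S₀ hbig hbd hmn hx)

end Aux

theorem infinite_clique_or_direct_sum_of_cliques {V : Type*} (G : SimpleGraph V)
    (h : ∀ n : ℕ, ∃ s : Finset V, s.card = n ∧ G.IsClique ↑s) :
    (∃ S : Set V, S.Infinite ∧ G.IsClique S) ∨
      ∃ A : ℕ → Finset V, (∀ m n, m ≠ n → Disjoint (A m) (A n)) ∧
        (∀ m n, m ≠ n → ∀ x ∈ A m, ∀ y ∈ A n, ¬ G.Adj x y) ∧
        ∀ n, n ≤ (A n).card ∧ G.IsClique ↑(A n) := by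
  classical
  have h0 : GoodS G ∅ := by
    refine ⟨by simp, fun n => ?_⟩
    obtain ⟨s, h1, h2⟩ := h n
    exact ⟨s, h1, h2, fun x _ => by simp [CNset]⟩
  by_cases hA : ∀ S, GoodS G S → ∃ v, v ∈ CNset G S ∧ GoodS G (insert v S)
  · -- infinite clique
    left
    refine ⟨Set.range (vseq G hA h0), ?_, ?_⟩
    · apply Set.infinite_range_of_injective
      intro m n hmn
      by_contra hne
      rcases Nat.lt_or_ge m n with hlt | hge
      · exact (vseq_adj G hA h0 hlt).ne hmn
      · exact (vseq_adj G hA h0 (by omega : n < m)).ne hmn.symm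
    · rintro x ⟨m, rfl⟩ y ⟨n, rfl⟩ hxy
      rcases lt_trichotomy m n with hlt | rfl | hlt
      · exact vseq_adj G hA h0 hlt
      · exact absurd rfl hxy
      · exact (vseq_adj G hA h0 hlt).symm
  · -- bounded case
    right
    push_neg at hA
    obtain ⟨S₀, hS₀good, hB⟩ := hA
    have hbig := hS₀good.2
    have hbd : ∀ v ∈ CNset G S₀, ∃ N : ℕ, ∀ t : Finset V, G.IsClique ↑t →
        ↑t ⊆ CNset G S₀ → (∀ x ∈ t, G.Adj v x) → t.card < N := by
      intro v hv
      have hclique : G.IsClique ↑(insert v S₀) := by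
        rw [Finset.coe_insert]
        exact hS₀good.1.insert (fun b hb _ => (hv b hb).symm)
      have hng := hB v hv
      rw [GoodS] at hng
      push_neg at hng
      obtain ⟨N, hN⟩ := hng hclique
      refine ⟨N, fun t ht htCN htadj => ?_⟩
      by_contra hcard
      push_neg at hcard
      obtain ⟨t', ht'sub, ht'card⟩ := Finset.exists_subset_card_eq hcard
      refine hN t' ht'card (ht.subset (by exact_mod_cast ht'sub)) ?_
      intro x hx
      intro w hw
      rw [Finset.mem_insert] at hw
      rcases hw with rfl | hw
      · exact htadj x (ht'sub hx)
      · exact htCN (ht'sub hx) w hw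
    refine ⟨Aseq G S₀ hbig hbd, ?_, ?_, ?_⟩
    · intro m n hmn
      rw [Finset.disjoint_left]
      intro x hxm hxn
      rcases Nat.lt_or_ge m n with hlt | hge
      · exact (Aseq_sep G S₀ hbig hbd hlt hxm hxn).2 rfl
      · exact (Aseq_sep G S₀ hbig hbd (by omega : n < m) hxn hxm).2 rfl
    · intro m n hmn x hx y hy
      rcases Nat.lt_or_ge m n with hlt | hge
      · exact (Aseq_sep G S₀ hbig hbd hlt hx hy).1
      · intro hadj
        exact (Aseq_sep G S₀ hbig hbd (by omega : n < m) hy hx).1 hadj.symm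
    · exact fun n => ⟨(Aseq_spec G S₀ hbig hbd n).1, (Aseq_spec G S₀ hbig hbd n).2.1⟩
end

section
/- Let G be a path-minimal simple graph such that every finite induced subgraph of G is isomorphic to an induced subgraph of some finite path (equivalently, is a disjoint union of finite paths). Then G is a direct sum of finite paths of unbounded length: every connected component of G is a finite path, and the lengths of the components are unbounded. -/
open SimpleGraph

section Aux
variable {V : Type*} {G : SimpleGraph V}

private lemma dist_one_cases {a b : ℕ} (h : Nat.dist a b = 1) : b = a + 1 ∨ a = b + 1 := by
  simp [Nat.dist] at h; omega

lemma myNbhdFinite (hage : ∀ A : Set V, A.Finite → ∃ m : ℕ, Nonempty (G.induce A ↪g pathG m))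
    (v : V) : {w | G.Adj v w}.Finite := by
  by_contra hinf
  rw [← Set.not_infinite, not_not] at hinf
  set e := hinf.natEmbedding with he
  have hne : ∀ p q : ℕ, p ≠ q → ((e p : V) ≠ (e q : V)) := by
    intro p q hpq h
    exact hpq (e.injective (Subtype.ext h))
  have hadj : ∀ p : ℕ, G.Adj v (e p) := fun p => (e p).2
  have hA : ({v, (e 0 : V), (e 1 : V), (e 2 : V)} : Set V).Finite := by
    exact ((((Set.finite_singleton _).insert _).insert _).insert _)
  obtain ⟨m, ⟨f⟩⟩ := hage _ hA
  have hvA : v ∈ ({v, (e 0 : V), (e 1 : V), (e 2 : V)} : Set V) := by simp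
  have hmem : ∀ p : ℕ, p < 3 → (e p : V) ∈ ({v, (e 0 : V), (e 1 : V), (e 2 : V)} : Set V) := by
    intro p hp
    interval_cases p <;> simp
  have key : ∀ (p : ℕ) (hp : p < 3),
      Nat.dist (f ⟨v, hvA⟩).val (f ⟨(e p : V), hmem p hp⟩).val = 1 := by
    intro p hp
    have h1 : (G.induce _).Adj ⟨v, hvA⟩ ⟨(e p : V), hmem p hp⟩ := by
      simp only [comap_adj, Function.Embedding.coe_subtype]
      exact hadj p
    exact f.map_adj_iff.mpr h1
  have hfne : ∀ (p q : ℕ) (hp : p < 3) (hq : q < 3), p ≠ q →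
      (f ⟨(e p : V), hmem p hp⟩).val ≠ (f ⟨(e q : V), hmem q hq⟩).val := by
    intro p q hp hq hpq h
    have h2 := f.injective (Fin.ext h)
    rw [Subtype.mk.injEq] at h2
    exact hne p q hpq h2
  have k0 := dist_one_cases (key 0 (by omega))
  have k1 := dist_one_cases (key 1 (by omega))
  have k2 := dist_one_cases (key 2 (by omega))
  have n01 := hfne 0 1 (by omega) (by omega) (by omega)
  have n02 := hfne 0 2 (by omega) (by omega) (by omega)
  have n12 := hfne 1 2 (by omega) (by omega) (by omega)
  omega

private lemma exists_clean_window {k n : ℕ} (B : Finset ℕ) (hB : B.card ≤ k) :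
    ∃ a, a + n < (k + 1) * (n + 1) ∧ ∀ i ≤ n, a + i ∉ B := by
  by_contra hcon
  push_neg at hcon
  have hw : ∀ j : Fin (k + 1), ∃ i, i ≤ n ∧ j.val * (n + 1) + i ∈ B := by
    intro j
    have hj : j.val ≤ k := Nat.lt_succ_iff.mp j.isLt
    have hlt : j.val * (n + 1) + n < (k + 1) * (n + 1) := by
      have : (j.val + 1) * (n + 1) ≤ (k + 1) * (n + 1) :=
        Nat.mul_le_mul_right _ (by omega)
      nlinarith
    obtain ⟨i, hi1, hi2⟩ := hcon _ hlt
    exact ⟨i, hi1, hi2⟩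
  choose i hi hmem using hw
  have hinj : Function.Injective (fun j : Fin (k + 1) => (⟨j.val * (n + 1) + i j, hmem j⟩ : ↥B)) := by
    intro j1 j2 h
    have h' : j1.val * (n + 1) + i j1 = j2.val * (n + 1) + i j2 := congrArg Subtype.val h
    have h1 := hi j1
    have h2 := hi j2
    rcases lt_trichotomy j1.val j2.val with hlt | heq | hlt
    · exfalso
      have hx : (j1.val + 1) * (n + 1) ≤ j2.val * (n + 1) := Nat.mul_le_mul_right _ (by omega)
      nlinarith
    · exact Fin.ext heq
    · exfalso
      have hx : (j2.val + 1) * (n + 1) ≤ j1.val * (n + 1) := Nat.mul_le_mul_right _ (by omega)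
      nlinarith
  have hcard := Fintype.card_le_of_injective _ hinj
  simp only [Fintype.card_coe, Fintype.card_fin] at hcard
  omega

lemma exists_path_avoiding (hup : HasUnboundedPaths G) (S : Set V) (hS : S.Finite) (n : ℕ) :
    ∃ x : Fin (n + 1) → V, IsInducedPath G x ∧ ∀ i, x i ∉ S := by
  classical
  set k := hS.toFinset.card with hk
  set M := (k + 1) * (n + 1) with hM
  obtain ⟨y, hyinj, hyadj⟩ := hup M
  set B : Finset (Fin (M + 1)) := Finset.univ.filter (fun i => y i ∈ S) with hB
  have hBcard : (B.image Fin.val).card ≤ k := by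
    calc (B.image Fin.val).card ≤ B.card := Finset.card_image_le
      _ ≤ k := by
        rw [hk]
        apply Finset.card_le_card_of_injOn y
        · intro i hi
          have hi' : y i ∈ S := by simpa [hB] using hi
          simpa using hi'
        · exact fun a _ b _ h => hyinj h
  obtain ⟨a, haM, hclean⟩ := exists_clean_window (n := n) (B.image Fin.val) hBcard
  have hbound : ∀ i : Fin (n + 1), a + i.val < M + 1 := by
    intro i
    have := i.isLt
    omega
  refine ⟨fun i => y ⟨a + i.val, hbound i⟩, ⟨?_, ?_⟩, ?_⟩
  · intro i j h
    have := hyinj h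
    have h2 : a + i.val = a + j.val := congrArg Fin.val this
    exact Fin.ext (by omega)
  · intro i j
    have := hyadj ⟨a + i.val, hbound i⟩ ⟨a + j.val, hbound j⟩
    simpa [Nat.dist_add_add_left] using this
  · intro i hiS
    have h1 : a + i.val ∈ B.image Fin.val := by
      have : (⟨a + i.val, hbound i⟩ : Fin (M + 1)) ∈ B := by
        simp only [hB, Finset.mem_filter]
        exact ⟨Finset.mem_univ _, hiS⟩
      exact Finset.mem_image_of_mem Fin.val this
    exact hclean i.val (Nat.lt_succ_iff.mp i.isLt) h1

end Aux

section Chain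
variable {V : Type*} {G : SimpleGraph V}

noncomputable def pmStep (hup : HasUnboundedPaths G)
    (hnb : ∀ v : V, {w | G.Adj v w}.Finite) (S : Set V) (hS : S.Finite) (n : ℕ) :
    {x : Fin (n + 1) → V // IsInducedPath G x ∧ ∀ i, x i ∉ S ∧ ∀ s ∈ S, ¬ G.Adj s (x i)} :=
  have hT : (S ∪ ⋃ s ∈ S, {w | G.Adj s w}).Finite :=
    hS.union (Set.Finite.biUnion hS fun s _ => hnb s)
  have h := exists_path_avoiding hup _ hT n
  ⟨h.choose, h.choose_spec.1, fun i =>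
    ⟨fun hmem => h.choose_spec.2 i (Or.inl hmem),
     fun s hs hadj => h.choose_spec.2 i (Or.inr (Set.mem_biUnion hs hadj))⟩⟩

noncomputable def chainAux (hup : HasUnboundedPaths G)
    (hnb : ∀ v : V, {w | G.Adj v w}.Finite) : (n : ℕ) →
    Σ' (S : Set V) (_ : S.Finite),
      {x : Fin (n + 1) → V // IsInducedPath G x ∧ ∀ i, x i ∉ S ∧ ∀ s ∈ S, ¬ G.Adj s (x i)}
  | 0 => ⟨∅, Set.finite_empty, pmStep hup hnb ∅ Set.finite_empty 0⟩
  | n + 1 =>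
    ⟨(chainAux hup hnb n).1 ∪ Set.range (chainAux hup hnb n).2.2.1,
     (chainAux hup hnb n).2.1.union (Set.finite_range _),
     pmStep hup hnb _ ((chainAux hup hnb n).2.1.union (Set.finite_range _)) (n + 1)⟩

lemma chain_mono (hup : HasUnboundedPaths G) (hnb : ∀ v : V, {w | G.Adj v w}.Finite) :
    ∀ {m n : ℕ}, m ≤ n → (chainAux hup hnb m).1 ⊆ (chainAux hup hnb n).1 := by
  intro m n h
  induction n with
  | zero => rw [Nat.le_zero.mp h]
  | succ n ih =>
    rcases eq_or_lt_of_le h with rfl | hlt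
    · rfl
    · refine subset_trans (ih (Nat.lt_succ_iff.mp hlt)) ?_
      rw [chainAux]
      exact Set.subset_union_left

lemma chain_range_subset (hup : HasUnboundedPaths G) (hnb : ∀ v : V, {w | G.Adj v w}.Finite)
    {m n : ℕ} (h : m < n) :
    Set.range (chainAux hup hnb m).2.2.1 ⊆ (chainAux hup hnb n).1 := by
  refine subset_trans ?_ (chain_mono hup hnb h)
  rw [chainAux]
  exact Set.subset_union_right

lemma chain_pairwise (hup : HasUnboundedPaths G) (hnb : ∀ v : V, {w | G.Adj v w}.Finite)
    {m n : ℕ} (h : m < n) (i : Fin (n + 1)) (j : Fin (m + 1)) :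
    (chainAux hup hnb n).2.2.1 i ≠ (chainAux hup hnb m).2.2.1 j ∧
      ¬ G.Adj ((chainAux hup hnb m).2.2.1 j) ((chainAux hup hnb n).2.2.1 i) := by
  have hmem : (chainAux hup hnb m).2.2.1 j ∈ (chainAux hup hnb n).1 :=
    chain_range_subset hup hnb h ⟨j, rfl⟩
  have hspec := (chainAux hup hnb n).2.2.2.2 i
  exact ⟨fun heq => hspec.1 (heq ▸ hmem), hspec.2 _ hmem⟩

end Chain

section PathOnComp
variable {V : Type*} {G : SimpleGraph V}

private lemma reachable_of_mem_support {u w z : V} (p : G.Walk u w) (hz : z ∈ p.support) :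
    G.Reachable u z := by
  induction p with
  | nil =>
    rw [Walk.support_nil] at hz
    rcases List.mem_singleton.mp hz with rfl
    exact Reachable.refl _
  | cons h q ih =>
    rw [Walk.support_cons] at hz
    rcases List.mem_cons.mp hz with rfl | h2
    · exact Reachable.refl _
    · exact h.reachable.trans (ih h2)

private lemma walk_ivt {S : Set V} (t : V → ℕ)
    (hstep : ∀ a b, a ∈ S → b ∈ S → G.Adj a b → Nat.dist (t a) (t b) = 1) :
    ∀ {u w : V} (p : G.Walk u w), (∀ z ∈ p.support, z ∈ S) →
      ∀ r, min (t u) (t w) ≤ r → r ≤ max (t u) (t w) → ∃ z ∈ p.support, t z = r := by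
  intro u w p
  induction p with
  | nil =>
    intro hsupp r h1 h2
    refine ⟨_, Walk.start_mem_support _, ?_⟩
    simp only [min_self, max_self] at h1 h2
    omega
  | @cons u b w h q ih =>
    intro hsupp r h1 h2
    by_cases hr : r = t u
    · exact ⟨u, Walk.start_mem_support _, hr.symm⟩
    · have hu : u ∈ S := hsupp u (Walk.start_mem_support _)
      have hbS : b ∈ S := hsupp b (by
        rw [Walk.support_cons]; exact List.mem_cons_of_mem _ (Walk.start_mem_support _))
      have hd := dist_one_cases (hstep u b hu hbS h)
      have hsupp' : ∀ z ∈ q.support, z ∈ S := fun z hz =>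
        hsupp z (by rw [Walk.support_cons]; exact List.mem_cons_of_mem _ hz)
      obtain ⟨z, hz1, hz2⟩ := ih hsupp' r (by omega) (by omega)
      exact ⟨z, by rw [Walk.support_cons]; exact List.mem_cons_of_mem _ hz1, hz2⟩

lemma comp_isPathOn (hage : ∀ A : Set V, A.Finite → ∃ m, Nonempty (G.induce A ↪g pathG m))
    (c : G.ConnectedComponent) (hfin : c.supp.Finite) : ∃ m, IsPathOn G c.supp m := by
  classical
  obtain ⟨v, rfl⟩ := c.exists_rep
  set S := (G.connectedComponentMk v).supp with hs
  have hvS : v ∈ S := by rw [hs, ConnectedComponent.mem_supp_iff]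
  obtain ⟨m, ⟨g⟩⟩ := hage S hfin
  haveI : Fintype ↥S := hfin.fintype
  set I : Finset ℕ := Finset.image (fun s : ↥S => (g s).val) Finset.univ with hI
  have hIne : I.Nonempty := ⟨(g ⟨v, hvS⟩).val, Finset.mem_image_of_mem _ (Finset.mem_univ _)⟩
  set lo := I.min' hIne with hlo
  set hi := I.max' hIne with hhi
  have hlohi : lo ≤ hi := I.min'_le _ (I.max'_mem hIne)
  set t : V → ℕ := fun w => if h : w ∈ S then (g ⟨w, h⟩).val else 0 with ht
  have htS : ∀ (w) (hw : w ∈ S), t w = (g ⟨w, hw⟩).val := fun w hw => dif_pos hw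
  have hstep : ∀ a b, a ∈ S → b ∈ S → G.Adj a b → Nat.dist (t a) (t b) = 1 := by
    intro a b ha hb hab
    rw [htS a ha, htS b hb]
    have hia : (G.induce S).Adj ⟨a, ha⟩ ⟨b, hb⟩ := by
      simp only [comap_adj, Function.Embedding.coe_subtype]; exact hab
    exact g.map_adj_iff.mpr hia
  have hIVT : ∀ r, lo ≤ r → r ≤ hi → r ∈ I := by
    intro r h1 h2
    obtain ⟨sa, -, hsa⟩ := Finset.mem_image.mp (I.min'_mem hIne)
    obtain ⟨sb, -, hsb⟩ := Finset.mem_image.mp (I.max'_mem hIne)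
    have ha : G.connectedComponentMk sa.val = G.connectedComponentMk v := sa.2
    have hreach : G.Reachable sa.val sb.val :=
      ConnectedComponent.eq.mp (ha.trans (sb.2 : G.connectedComponentMk sb.val = _).symm)
    obtain ⟨p⟩ := hreach
    have hsupp : ∀ z ∈ p.support, z ∈ S := by
      intro z hz
      have hrz := reachable_of_mem_support p hz
      show G.connectedComponentMk z = G.connectedComponentMk v
      rw [← ha]
      exact ConnectedComponent.eq.mpr hrz.symm
    have hta : t sa.val = lo := by rw [htS _ sa.2]; exact hsa
    have htb : t sb.val = hi := by rw [htS _ sb.2]; exact hsb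
    obtain ⟨z, hz1, hz2⟩ := walk_ivt t hstep p hsupp r (by omega) (by omega)
    have hzS := hsupp z hz1
    rw [htS z hzS] at hz2
    rw [hI, Finset.mem_image]
    exact ⟨⟨z, hzS⟩, Finset.mem_univ _, hz2⟩
  have hchoose : ∀ i : Fin (hi - lo + 1), ∃ s : ↥S, (g s).val = lo + i.val := by
    intro i
    have hmem : lo + i.val ∈ I := hIVT _ (by omega) (by have := i.isLt; omega)
    obtain ⟨s, -, hs'⟩ := Finset.mem_image.mp hmem
    exact ⟨s, hs'⟩
  choose σ hσ using hchoose
  refine ⟨hi - lo, fun i => (σ i).val, ?_, ?_, ?_⟩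
  · intro i j hij
    have h1 : σ i = σ j := Subtype.ext hij
    have h2 : (g (σ i)).val = (g (σ j)).val := by rw [h1]
    rw [hσ, hσ] at h2
    exact Fin.ext (by omega)
  · apply Set.eq_of_subset_of_subset
    · rintro w ⟨i, rfl⟩; exact (σ i).2
    · intro w hw
      have hwI : (g ⟨w, hw⟩).val ∈ I := Finset.mem_image_of_mem _ (Finset.mem_univ _)
      have h1 : lo ≤ (g ⟨w, hw⟩).val := I.min'_le _ hwI
      have h2 : (g ⟨w, hw⟩).val ≤ hi := I.le_max' _ hwI
      refine ⟨⟨(g ⟨w, hw⟩).val - lo, by omega⟩, ?_⟩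
      have h3 := hσ ⟨(g ⟨w, hw⟩).val - lo, by omega⟩
      have hgeq : g (σ ⟨(g ⟨w, hw⟩).val - lo, by omega⟩) = g ⟨w, hw⟩ := Fin.ext (by rw [h3]; simp; omega)
      have h4 : σ ⟨(g ⟨w, hw⟩).val - lo, by omega⟩ = ⟨w, hw⟩ := g.injective hgeq
      exact congrArg Subtype.val h4
  · intro i j
    have hadj : G.Adj (σ i).val (σ j).val ↔ (G.induce S).Adj (σ i) (σ j) := by
      simp only [comap_adj, Function.Embedding.coe_subtype]
    rw [hadj, ← g.map_adj_iff]
    have hpg : (pathG m).Adj (g (σ i)) (g (σ j)) ↔ Nat.dist (g (σ i)).val (g (σ j)).val = 1 :=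
      Iff.rfl
    rw [hpg, hσ, hσ, Nat.dist_add_add_left]

end PathOnComp

theorem pathMinimal_with_path_age_is_direct_sum_of_paths' {V : Type*} (G : SimpleGraph V)
    (hmin : HasUnboundedPaths G ∧
      ∀ A : Set V, HasUnboundedPaths (G.induce A) → Nonempty (G ↪g G.induce A))
    (hage : ∀ A : Set V, A.Finite → ∃ m : ℕ, Nonempty (G.induce A ↪g pathG m)) :
    (∀ c : G.ConnectedComponent, ∃ m : ℕ, IsPathOn G c.supp m) ∧
      ∀ n : ℕ, ∃ c : G.ConnectedComponent, ∃ m : ℕ, n ≤ m ∧ IsPathOn G c.supp m := by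
  classical
  obtain ⟨hup, hminA⟩ := hmin
  have hnb := myNbhdFinite hage
  set x : (n : ℕ) → Fin (n + 1) → V := fun n => (chainAux hup hnb n).2.2.1 with hx
  have hpath : ∀ n, IsInducedPath G (x n) := fun n => (chainAux hup hnb n).2.2.2.1
  have hpair : ∀ {m n : ℕ}, m < n → ∀ (i : Fin (n + 1)) (j : Fin (m + 1)),
      x n i ≠ x m j ∧ ¬ G.Adj (x m j) (x n i) :=
    fun h i j => chain_pairwise hup hnb h i j
  set Astar : Set V := ⋃ n, Set.range (x n) with hAstar
  have hupA : HasUnboundedPaths (G.induce Astar) := by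
    intro n
    refine ⟨fun i => ⟨x n i, Set.mem_iUnion.mpr ⟨n, ⟨i, rfl⟩⟩⟩, ?_, ?_⟩
    · intro i j h
      exact (hpath n).1 (congrArg Subtype.val h)
    · intro i j
      rw [← (hpath n).2 i j]
      simp only [comap_adj, Function.Embedding.coe_subtype]
  obtain ⟨f⟩ := hminA Astar hupA
  have hstepidx : ∀ a b : V, G.Adj a b → ∀ m n : ℕ, (f a).val ∈ Set.range (x m) →
      (f b).val ∈ Set.range (x n) → m = n := by
    rintro a b hab m n ⟨i, hi⟩ ⟨j, hj⟩
    by_contra hmn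
    have hadj : G.Adj (f a).val (f b).val := f.map_adj_iff.mpr hab
    rw [← hi, ← hj] at hadj
    rcases Nat.lt_or_ge m n with h | h
    · exact (hpair h j i).2 hadj
    · exact (hpair (by omega) i j).2 hadj.symm
  have hwalk : ∀ (n₀ : ℕ) {a b : V} (p : G.Walk a b), (f a).val ∈ Set.range (x n₀) →
      (f b).val ∈ Set.range (x n₀) := by
    intro n₀ a b p
    induction p with
    | nil => exact id
    | @cons a c b h q ih =>
      intro ha
      obtain ⟨k, hk⟩ := Set.mem_iUnion.mp (f c).2
      have hkeq := hstepidx a c h n₀ k ha hk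
      exact ih (hkeq ▸ hk)
  have hfin : ∀ c : G.ConnectedComponent, c.supp.Finite := by
    intro c
    obtain ⟨v, rfl⟩ := c.exists_rep
    obtain ⟨n₀, hn₀⟩ := Set.mem_iUnion.mp (f v).2
    have hsub : (G.connectedComponentMk v).supp ⊆ (fun w => (f w).val) ⁻¹' (Set.range (x n₀)) := by
      intro w hw
      have hr : G.Reachable v w := (ConnectedComponent.eq.mp hw).symm
      obtain ⟨p⟩ := hr
      exact hwalk n₀ p hn₀
    refine Set.Finite.subset (Set.Finite.preimage ?_ (Set.finite_range (x n₀))) hsub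
    intro a _ b _ hab
    exact f.injective (Subtype.ext hab)
  refine ⟨fun c => comp_isPathOn hage c (hfin c), ?_⟩
  intro n
  obtain ⟨y, hyinj, hyadj⟩ := hup n
  set c := G.connectedComponentMk (y ⟨0, n.succ_pos⟩) with hc
  have haux : ∀ (j : ℕ) (h : j < n + 1), G.Reachable (y ⟨0, n.succ_pos⟩) (y ⟨j, h⟩) := by
    intro j
    induction j with
    | zero => intro h; exact Reachable.refl _
    | succ j ih =>
      intro h
      have hadj : G.Adj (y ⟨j, by omega⟩) (y ⟨j + 1, h⟩) := by
        rw [hyadj]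
        simp [Nat.dist]
      exact (ih (by omega)).trans hadj.reachable
  have hyc : ∀ i : Fin (n + 1), y i ∈ c.supp := by
    intro i
    show G.connectedComponentMk (y i) = c
    rw [hc]
    exact ConnectedComponent.eq.mpr (haux i.val i.isLt).symm
  obtain ⟨m, hpm⟩ := comp_isPathOn hage c (hfin c)
  obtain ⟨xm, hxinj, hxrange, hxadj⟩ := hpm
  have hex : ∀ i : Fin (n + 1), ∃ j : Fin (m + 1), xm j = y i := by
    intro i
    have h1 := hyc i
    rw [← hxrange] at h1
    exact h1
  choose τ hτ using hex
  have hinj : Function.Injective τ := by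
    intro i j h
    apply hyinj
    rw [← hτ i, ← hτ j, h]
  have hcard := Fintype.card_le_of_injective τ hinj
  simp only [Fintype.card_fin] at hcard
  exact ⟨c, m, by omega, xm, hxinj, hxrange, hxadj⟩

theorem pathMinimal_with_path_age_is_direct_sum_of_paths {V : Type*} (G : SimpleGraph V)
    (hmin : PathMinimal G)
    (hage : ∀ A : Set V, A.Finite → ∃ m : ℕ, Nonempty (G.induce A ↪g pathG m)) :
    (∀ c : G.ConnectedComponent, ∃ m : ℕ, IsPathOn G c.supp m) ∧
      ∀ n : ℕ, ∃ c : G.ConnectedComponent, ∃ m : ℕ, n ≤ m ∧ IsPathOn G c.supp m :=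
  pathMinimal_with_path_age_is_direct_sum_of_paths' G hmin hage
end

section
/- For the graph Ĝ_2 the diameter equals 3: any two vertices of Ĝ_2 are at graph distance at most 3, and some pair of vertices is at distance exactly 3. For every integer k ≥ 3, the diameter of Ĝ_k equals 2: any two distinct vertices are at graph distance at most 2, and some pair of vertices is at distance exactly 2. -/
open SimpleGraph

lemma ghat_adj {k : ℕ} {a b : ℕ × ℕ} : (Ghat k).Adj a b ↔
    ((a.1 = b.1 ∧ Nat.dist a.2 b.2 = 1) ∨ (a.1 ≠ b.1 ∧ ¬ a.2 ≡ b.2 [MOD k])) := Iff.rfl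

lemma not_modEq_succ {k y : ℕ} (hk : 2 ≤ k) : ¬ (y + 1) ≡ y [MOD k] := by
  intro h
  have h1 : k ∣ 1 := by simpa using (Nat.modEq_iff_dvd' (Nat.le_succ y)).mp h.symm
  have := Nat.le_of_dvd one_pos h1
  omega

lemma not_modEq_add_two {k y : ℕ} (hk : 3 ≤ k) : ¬ (y + 2) ≡ y [MOD k] := by
  intro h
  have h1 : k ∣ 2 := by simpa using (Nat.modEq_iff_dvd' (by omega : y ≤ y + 2)).mp h.symm
  have := Nat.le_of_dvd (by norm_num) h1
  omega

lemma dist_le_two_of_adj_adj {V : Type*} {G : SimpleGraph V} {a b c : V}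
    (h1 : G.Adj a c) (h2 : G.Adj c b) : G.Reachable a b ∧ G.dist a b ≤ 2 :=
  ⟨h1.reachable.trans h2.reachable,
    by simpa using SimpleGraph.dist_le (Walk.cons h1 (Walk.cons h2 Walk.nil))⟩

lemma dist_le_three_of_adj {V : Type*} {G : SimpleGraph V} {a b c d : V}
    (h1 : G.Adj a c) (h2 : G.Adj c d) (h3 : G.Adj d b) :
    G.Reachable a b ∧ G.dist a b ≤ 3 :=
  ⟨h1.reachable.trans (h2.reachable.trans h3.reachable),
    by simpa using SimpleGraph.dist_le (Walk.cons h1 (Walk.cons h2 (Walk.cons h3 Walk.nil)))⟩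

lemma exists_mid_of_dist_two {V : Type*} {G : SimpleGraph V} {a b : V}
    (h : G.dist a b = 2) : ∃ c, G.Adj a c ∧ G.Adj c b := by
  have hne : G.dist a b ≠ 0 := by omega
  obtain ⟨p, hp⟩ :=
    (SimpleGraph.Reachable.of_dist_ne_zero hne).exists_walk_length_eq_dist
  rw [h] at hp
  cases p with
  | nil => simp at hp
  | cons h1 q =>
    cases q with
    | nil => simp at hp
    | cons h2 r =>
      cases r with
      | nil => exact ⟨_, h1, h2⟩
      | cons h3 s => simp [Walk.length_cons] at hp

theorem diameter_Ghat :
    ((∀ a b : ℕ × ℕ, (Ghat 2).Reachable a b ∧ (Ghat 2).dist a b ≤ 3) ∧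
      ∃ a b : ℕ × ℕ, (Ghat 2).dist a b = 3) ∧
    ∀ k : ℕ, 3 ≤ k →
      ((∀ a b : ℕ × ℕ, (Ghat k).Reachable a b ∧ (Ghat k).dist a b ≤ 2) ∧
        ∃ a b : ℕ × ℕ, (Ghat k).dist a b = 2) := by
  constructor
  · constructor
    · rintro ⟨x, y⟩ ⟨x', y'⟩
      by_cases hab : ((x, y) : ℕ × ℕ) = (x', y')
      · rw [hab]; exact ⟨Reachable.refl _, by rw [SimpleGraph.dist_self]; omega⟩
      by_cases hadj : (Ghat 2).Adj (x, y) (x', y')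
      · exact ⟨hadj.reachable,
          le_trans (SimpleGraph.dist_le (Walk.cons hadj Walk.nil)) (by simp)⟩
      by_cases hmod : y ≡ y' [MOD 2]
      · by_cases hx : x = x'
        · have h1 : (Ghat 2).Adj (x, y) (x + 1, y + 1) :=
            ghat_adj.mpr (Or.inr ⟨show x ≠ x + 1 by omega,
              show ¬ y ≡ y + 1 [MOD 2] from fun h => not_modEq_succ le_rfl h.symm⟩)
          have h2 : (Ghat 2).Adj (x + 1, y + 1) (x', y') :=
            ghat_adj.mpr (Or.inr ⟨show x + 1 ≠ x' by omega,
              show ¬ y + 1 ≡ y' [MOD 2] from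
                fun h => not_modEq_succ le_rfl (h.trans hmod.symm)⟩)
          obtain ⟨hr, hd⟩ := dist_le_two_of_adj_adj h1 h2
          exact ⟨hr, by omega⟩
        · have h1 : (Ghat 2).Adj (x, y) (x + x' + 1, y + 1) :=
            ghat_adj.mpr (Or.inr ⟨show x ≠ x + x' + 1 by omega,
              show ¬ y ≡ y + 1 [MOD 2] from fun h => not_modEq_succ le_rfl h.symm⟩)
          have h2 : (Ghat 2).Adj (x + x' + 1, y + 1) (x', y') :=
            ghat_adj.mpr (Or.inr ⟨show x + x' + 1 ≠ x' by omega,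
              show ¬ y + 1 ≡ y' [MOD 2] from
                fun h => not_modEq_succ le_rfl (h.trans hmod.symm)⟩)
          obtain ⟨hr, hd⟩ := dist_le_two_of_adj_adj h1 h2
          exact ⟨hr, by omega⟩
      · by_cases hx : x = x'
        · have h1 : (Ghat 2).Adj (x, y) (x + 1, y + 1) :=
            ghat_adj.mpr (Or.inr ⟨show x ≠ x + 1 by omega,
              show ¬ y ≡ y + 1 [MOD 2] from fun h => not_modEq_succ le_rfl h.symm⟩)
          have h2 : (Ghat 2).Adj (x + 1, y + 1) (x, y' + 1) :=
            ghat_adj.mpr (Or.inr ⟨show x + 1 ≠ x by omega,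
              show ¬ y + 1 ≡ y' + 1 [MOD 2] from
                fun h => hmod (Nat.ModEq.add_right_cancel' 1 h)⟩)
          have h3 : (Ghat 2).Adj (x, y' + 1) (x', y') :=
            ghat_adj.mpr (Or.inl ⟨show x = x' from hx,
              show (y' + 1) - y' + (y' - (y' + 1)) = 1 by omega⟩)
          exact dist_le_three_of_adj h1 h2 h3
        · exact absurd (ghat_adj.mpr (Or.inr ⟨hx, hmod⟩)) hadj
    · refine ⟨(0, 0), (0, 3), ?_⟩
      have h1 : (Ghat 2).Adj (0, 0) (1, 1) :=
        ghat_adj.mpr (Or.inr ⟨by norm_num, by decide⟩)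
      have h2 : (Ghat 2).Adj (1, 1) (0, 2) :=
        ghat_adj.mpr (Or.inr ⟨by norm_num, by decide⟩)
      have h3 : (Ghat 2).Adj (0, 2) (0, 3) :=
        ghat_adj.mpr (Or.inl ⟨rfl, by decide⟩)
      obtain ⟨hr, hle⟩ := dist_le_three_of_adj h1 h2 h3
      have hne0 : (Ghat 2).dist (0, 0) (0, 3) ≠ 0 := by
        intro h
        rcases SimpleGraph.dist_eq_zero_iff_eq_or_not_reachable.mp h with h | h
        · simp [Prod.ext_iff] at h
        · exact h hr
      have hne1 : (Ghat 2).dist (0, 0) (0, 3) ≠ 1 := by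
        intro h
        rcases ghat_adj.mp (SimpleGraph.dist_eq_one_iff_adj.mp h) with ⟨_, d⟩ | ⟨e, _⟩
        · simp [Nat.dist] at d
        · exact e rfl
      have hne2 : (Ghat 2).dist (0, 0) (0, 3) ≠ 2 := by
        intro h
        obtain ⟨⟨cx, cy⟩, ha, hb⟩ := exists_mid_of_dist_two h
        rcases ghat_adj.mp ha with ⟨e1, d1⟩ | ⟨e1, m1⟩ <;>
          rcases ghat_adj.mp hb with ⟨e2, d2⟩ | ⟨e2, m2⟩ <;>
          simp only [Nat.dist, Nat.ModEq, ne_eq] at * <;> omega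
      omega
  · intro k hk
    constructor
    · rintro ⟨x, y⟩ ⟨x', y'⟩
      by_cases hab : ((x, y) : ℕ × ℕ) = (x', y')
      · rw [hab]; exact ⟨Reachable.refl _, by rw [SimpleGraph.dist_self]; omega⟩
      by_cases hadj : (Ghat k).Adj (x, y) (x', y')
      · exact ⟨hadj.reachable,
          le_trans (SimpleGraph.dist_le (Walk.cons hadj Walk.nil)) (by simp)⟩
      by_cases hx : x = x'
      · by_cases hmod : y ≡ y' [MOD k]
        · have h1 : (Ghat k).Adj (x, y) (x + 1, y + 1) :=
            ghat_adj.mpr (Or.inr ⟨show x ≠ x + 1 by omega,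
              show ¬ y ≡ y + 1 [MOD k] from
                fun h => not_modEq_succ (by omega) h.symm⟩)
          have h2 : (Ghat k).Adj (x + 1, y + 1) (x', y') :=
            ghat_adj.mpr (Or.inr ⟨show x + 1 ≠ x' by omega,
              show ¬ y + 1 ≡ y' [MOD k] from
                fun h => not_modEq_succ (by omega) (h.trans hmod.symm)⟩)
          exact dist_le_two_of_adj_adj h1 h2
        · by_cases h2 : (y + 1) ≡ y' [MOD k]
          · have ha : (Ghat k).Adj (x, y) (x + 1, y + 2) :=
              ghat_adj.mpr (Or.inr ⟨show x ≠ x + 1 by omega,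
                show ¬ y ≡ y + 2 [MOD k] from
                  fun h => not_modEq_add_two hk h.symm⟩)
            have hb : (Ghat k).Adj (x + 1, y + 2) (x', y') :=
              ghat_adj.mpr (Or.inr ⟨show x + 1 ≠ x' by omega,
                show ¬ y + 2 ≡ y' [MOD k] from
                  fun h => not_modEq_succ (y := y + 1) (by omega) (h.trans h2.symm)⟩)
            exact dist_le_two_of_adj_adj ha hb
          · have ha : (Ghat k).Adj (x, y) (x + 1, y + 1) :=
              ghat_adj.mpr (Or.inr ⟨show x ≠ x + 1 by omega,
                show ¬ y ≡ y + 1 [MOD k] from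
                  fun h => not_modEq_succ (by omega) h.symm⟩)
            have hb : (Ghat k).Adj (x + 1, y + 1) (x', y') :=
              ghat_adj.mpr (Or.inr ⟨show x + 1 ≠ x' by omega,
                show ¬ y + 1 ≡ y' [MOD k] from h2⟩)
            exact dist_le_two_of_adj_adj ha hb
      · by_cases hmod : y ≡ y' [MOD k]
        · have h1 : (Ghat k).Adj (x, y) (x + x' + 1, y + 1) :=
            ghat_adj.mpr (Or.inr ⟨show x ≠ x + x' + 1 by omega,
              show ¬ y ≡ y + 1 [MOD k] from
                fun h => not_modEq_succ (by omega) h.symm⟩)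
          have h2 : (Ghat k).Adj (x + x' + 1, y + 1) (x', y') :=
            ghat_adj.mpr (Or.inr ⟨show x + x' + 1 ≠ x' by omega,
              show ¬ y + 1 ≡ y' [MOD k] from
                fun h => not_modEq_succ (by omega) (h.trans hmod.symm)⟩)
          exact dist_le_two_of_adj_adj h1 h2
        · exact absurd (ghat_adj.mpr (Or.inr ⟨hx, hmod⟩)) hadj
    · refine ⟨(0, 0), (1, 0), ?_⟩
      have h1 : (Ghat k).Adj (0, 0) (2, 1) :=
        ghat_adj.mpr (Or.inr ⟨by norm_num,
          show ¬ (0 : ℕ) ≡ 0 + 1 [MOD k] from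
            fun h => not_modEq_succ (by omega) h.symm⟩)
      have h2 : (Ghat k).Adj (2, 1) (1, 0) :=
        ghat_adj.mpr (Or.inr ⟨by norm_num,
          show ¬ (0 + 1 : ℕ) ≡ 0 [MOD k] from not_modEq_succ (by omega)⟩)
      obtain ⟨hr, hle⟩ := dist_le_two_of_adj_adj h1 h2
      have hne0 : (Ghat k).dist (0, 0) (1, 0) ≠ 0 := by
        intro h
        rcases SimpleGraph.dist_eq_zero_iff_eq_or_not_reachable.mp h with h | h
        · simp [Prod.ext_iff] at h
        · exact h hr
      have hne1 : (Ghat k).dist (0, 0) (1, 0) ≠ 1 := by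
        intro h
        rcases ghat_adj.mp (SimpleGraph.dist_eq_one_iff_adj.mp h) with ⟨e, _⟩ | ⟨_, m⟩
        · simp at e
        · exact m rfl
      omega
end

section
/- For every integer k ≥ 2 the graph Q̂_k is prime: every module of Q̂_k is trivial, i.e., every module is empty, a singleton, or the whole vertex set {(n, m) ∈ ℕ × ℕ : m < n + 5}. -/
open SimpleGraph

section QhatPrimeAux

lemma qp_adj {k : ℕ} {a b : Qset} : (Qhat k).Adj a b ↔
    ((a : ℕ×ℕ).1 = (b : ℕ×ℕ).1 ∧ Nat.dist (a : ℕ×ℕ).2 (b : ℕ×ℕ).2 = 1) ∨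
    ((a : ℕ×ℕ).1 ≠ (b : ℕ×ℕ).1 ∧ ¬ (a : ℕ×ℕ).2 ≡ (b : ℕ×ℕ).2 [MOD k]) := Iff.rfl

lemma qp_mem {x h : ℕ} : ((x, h) : ℕ×ℕ) ∈ Qset ↔ h < x + 5 := Iff.rfl

lemma qp_not_modeq {k y z : ℕ} (hle : y ≤ z) (hd : ¬ k ∣ (z - y)) : ¬ y ≡ z [MOD k] :=
  fun h => hd ((Nat.modEq_iff_dvd' hle).mp h)

lemma qp_not_modeq_succ {k : ℕ} (hk : 2 ≤ k) (y : ℕ) : ¬ y ≡ y + 1 [MOD k] := by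
  apply qp_not_modeq (Nat.le_succ y)
  intro h
  have h2 := Nat.le_of_dvd (by omega) h
  omega

lemma qp_modeq_add {k a c : ℕ} : a ≡ a + k * c [MOD k] :=
  (Nat.modEq_iff_dvd' (Nat.le_add_right _ _)).mpr ⟨c, by omega⟩

lemma qp_absorb {k : ℕ} {M : Set Qset} (hM : IsModule (Qhat k) M) {p q v : Qset}
    (hp : p ∈ M) (hq : q ∈ M) (h1 : (Qhat k).Adj v p) (h2 : ¬ (Qhat k).Adj v q) :
    v ∈ M := by
  by_contra hv
  rcases hM v hv with h | h
  · exact h2 (h q hq)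
  · exact h p hp h1

lemma qp_samecol {k : ℕ} (hk : 2 ≤ k) {M : Set Qset} (hM : IsModule (Qhat k) M)
    {a b : Qset} (ha : a ∈ M) (hb : b ∈ M) (hcol : (a : ℕ×ℕ).1 = (b : ℕ×ℕ).1)
    (hlt : (a : ℕ×ℕ).2 < (b : ℕ×ℕ).2) (hcong : (a : ℕ×ℕ).2 ≡ (b : ℕ×ℕ).2 [MOD k]) :
    ∃ p ∈ M, ∃ q ∈ M, ¬ (p : ℕ×ℕ).2 ≡ (q : ℕ×ℕ).2 [MOD k] := by
  obtain ⟨⟨x, y⟩, hyQ⟩ := a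
  obtain ⟨⟨x', y'⟩, hy'Q⟩ := b
  have hxx : x = x' := hcol
  have hyy : y < y' := hlt
  have hcong' : y ≡ y' [MOD k] := hcong
  have hyQ' : y < x + 5 := hyQ
  have hy'Q' : y' < x' + 5 := hy'Q
  have hkd : k ∣ (y' - y) := (Nat.modEq_iff_dvd' hyy.le).mp hcong'
  have hk2 : k ≤ y' - y := Nat.le_of_dvd (by omega) hkd
  by_cases hd : y' - y = 2
  · by_cases hy : 1 ≤ y
    · -- v = (x, y-1), adjacent to a, not to b
      have hvQ : ((x, y - 1) : ℕ×ℕ) ∈ Qset := qp_mem.mpr (by omega)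
      have hadj : (Qhat k).Adj ⟨(x, y - 1), hvQ⟩ ⟨(x, y), hyQ⟩ :=
        qp_adj.mpr (Or.inl ⟨rfl, by simp [Nat.dist]; omega⟩)
      have hnadj : ¬ (Qhat k).Adj ⟨(x, y - 1), hvQ⟩ ⟨(x', y'), hy'Q⟩ := by
        intro hc
        rcases qp_adj.mp hc with ⟨_, hdd⟩ | ⟨hne, _⟩
        · simp [Nat.dist] at hdd; omega
        · exact hne hxx
      have hv : (⟨(x, y - 1), hvQ⟩ : Qset) ∈ M := qp_absorb hM ha hb hadj hnadj
      refine ⟨⟨(x, y - 1), hvQ⟩, hv, ⟨(x, y), hyQ⟩, ha, ?_⟩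
      show ¬ (y - 1) ≡ y [MOD k]
      apply qp_not_modeq (by omega)
      intro hdvd
      have h9 := Nat.le_of_dvd (by omega : 0 < y - (y - 1)) hdvd
      omega
    · -- y = 0, y' = 2, v = (x, 3) adjacent to b not a
      have hy0 : y = 0 := by omega
      have hvQ : ((x, 3) : ℕ×ℕ) ∈ Qset := qp_mem.mpr (by omega)
      have hadj : (Qhat k).Adj ⟨(x, 3), hvQ⟩ ⟨(x', y'), hy'Q⟩ :=
        qp_adj.mpr (Or.inl ⟨hxx, by simp [Nat.dist]; omega⟩)
      have hnadj : ¬ (Qhat k).Adj ⟨(x, 3), hvQ⟩ ⟨(x, y), hyQ⟩ := by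
        intro hc
        rcases qp_adj.mp hc with ⟨_, hdd⟩ | ⟨hne, _⟩
        · simp [Nat.dist] at hdd; omega
        · exact hne rfl
      have hv : (⟨(x, 3), hvQ⟩ : Qset) ∈ M := qp_absorb hM hb ha hadj hnadj
      refine ⟨⟨(x', y'), hy'Q⟩, hb, ⟨(x, 3), hvQ⟩, hv, ?_⟩
      show ¬ y' ≡ 3 [MOD k]
      apply qp_not_modeq (by omega)
      intro hdvd
      have h9 := Nat.le_of_dvd (by omega : 0 < 3 - y') hdvd
      omega
  · -- y' - y ≥ 3, v = (x, y+1) adjacent to a, not to b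
    have hvQ : ((x, y + 1) : ℕ×ℕ) ∈ Qset := qp_mem.mpr (by omega)
    have hadj : (Qhat k).Adj ⟨(x, y + 1), hvQ⟩ ⟨(x, y), hyQ⟩ :=
      qp_adj.mpr (Or.inl ⟨rfl, by simp [Nat.dist]⟩)
    have hnadj : ¬ (Qhat k).Adj ⟨(x, y + 1), hvQ⟩ ⟨(x', y'), hy'Q⟩ := by
      intro hc
      rcases qp_adj.mp hc with ⟨_, hdd⟩ | ⟨hne, _⟩
      · simp [Nat.dist] at hdd; omega
      · exact hne hxx
    have hv : (⟨(x, y + 1), hvQ⟩ : Qset) ∈ M := qp_absorb hM ha hb hadj hnadj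
    exact ⟨⟨(x, y), hyQ⟩, ha, ⟨(x, y + 1), hvQ⟩, hv, qp_not_modeq_succ hk y⟩

lemma qp_cross_core {k : ℕ} (hk : 2 ≤ k) {M : Set Qset} (hM : IsModule (Qhat k) M)
    {x y : ℕ} {hyQ : ((x, y) : ℕ×ℕ) ∈ Qset} {b : Qset}
    (ha : (⟨(x, y), hyQ⟩ : Qset) ∈ M) (hb : b ∈ M)
    (hcol : x ≠ (b : ℕ×ℕ).1) (hcong : y ≡ (b : ℕ×ℕ).2 [MOD k])
    (z : ℕ) (hz : z < x + 5) (hdist : Nat.dist z y ≠ 1)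
    (hmodz : ¬ z ≡ y [MOD k]) :
    ∃ p ∈ M, ∃ q ∈ M, ¬ (p : ℕ×ℕ).2 ≡ (q : ℕ×ℕ).2 [MOD k] := by
  have hvQ : ((x, z) : ℕ×ℕ) ∈ Qset := qp_mem.mpr hz
  have hadj : (Qhat k).Adj ⟨(x, z), hvQ⟩ b :=
    qp_adj.mpr (Or.inr ⟨hcol, fun h => hmodz (h.trans hcong.symm)⟩)
  have hnadj : ¬ (Qhat k).Adj ⟨(x, z), hvQ⟩ ⟨(x, y), hyQ⟩ := by
    intro hc
    rcases qp_adj.mp hc with ⟨_, hdd⟩ | ⟨hne, _⟩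
    · exact hdist hdd
    · exact hne rfl
  have hv : (⟨(x, z), hvQ⟩ : Qset) ∈ M := qp_absorb hM hb ha hadj hnadj
  exact ⟨⟨(x, z), hvQ⟩, hv, ⟨(x, y), hyQ⟩, ha, hmodz⟩

lemma qp_crosscol {k : ℕ} (hk : 2 ≤ k) {M : Set Qset} (hM : IsModule (Qhat k) M)
    {a b : Qset} (ha : a ∈ M) (hb : b ∈ M) (hcol : (a : ℕ×ℕ).1 ≠ (b : ℕ×ℕ).1)
    (hcong : (a : ℕ×ℕ).2 ≡ (b : ℕ×ℕ).2 [MOD k])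
    (hcorner : (a : ℕ×ℕ) ≠ ((0 : ℕ), (2 : ℕ)) ∨ 3 ≤ k) :
    ∃ p ∈ M, ∃ q ∈ M, ¬ (p : ℕ×ℕ).2 ≡ (q : ℕ×ℕ).2 [MOD k] := by
  obtain ⟨⟨x, y⟩, hyQ⟩ := a
  have hyQ' : y < x + 5 := hyQ
  have hcol' : x ≠ (b : ℕ×ℕ).1 := hcol
  have hcong' : y ≡ (b : ℕ×ℕ).2 [MOD k] := hcong
  rcases Nat.lt_or_ge k 3 with hk3 | hk3
  · -- k = 2, offset 3
    have hkk : k = 2 := by omega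
    have hnd : ¬ k ∣ 3 := by rw [hkk]; omega
    by_cases hz : y + 3 < x + 5
    · refine qp_cross_core hk hM ha hb hcol' hcong' (y + 3) hz (by simp only [Nat.dist]; omega) ?_
      intro hc
      exact qp_not_modeq (Nat.le_add_right y 3) (by simpa using hnd) hc.symm
    · have hy3 : 3 ≤ y := by
        rcases hcorner with hc | hc
        · have : ¬ (x = 0 ∧ y = 2) := by
            intro ⟨h1, h2⟩; exact hc (by simp [h1, h2])
          omega
        · omega
      refine qp_cross_core hk hM ha hb hcol' hcong' (y - 3) (by omega) (by simp only [Nat.dist]; omega) ?_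
      apply qp_not_modeq (by omega : y - 3 ≤ y)
      have h9 : y - (y - 3) = 3 := by omega
      rw [h9]; exact hnd
  · -- k ≥ 3, offset 2
    have hnd : ¬ k ∣ 2 := by
      intro h; have := Nat.le_of_dvd (by omega) h; omega
    by_cases hz : y + 2 < x + 5
    · refine qp_cross_core hk hM ha hb hcol' hcong' (y + 2) hz (by simp only [Nat.dist]; omega) ?_
      intro hc
      exact qp_not_modeq (Nat.le_add_right y 2) (by simpa using hnd) hc.symm
    · have hy2 : 2 ≤ y := by omega
      refine qp_cross_core hk hM ha hb hcol' hcong' (y - 2) (by omega) (by simp only [Nat.dist]; omega) ?_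
      apply qp_not_modeq (by omega : y - 2 ≤ y)
      have h9 : y - (y - 2) = 2 := by omega
      rw [h9]; exact hnd

lemma qp_incong {k : ℕ} (hk : 2 ≤ k) {M : Set Qset} (hM : IsModule (Qhat k) M)
    {a b : Qset} (ha : a ∈ M) (hb : b ∈ M) (hab : a ≠ b) :
    ∃ p ∈ M, ∃ q ∈ M, ¬ (p : ℕ×ℕ).2 ≡ (q : ℕ×ℕ).2 [MOD k] := by
  by_cases hcong : (a : ℕ×ℕ).2 ≡ (b : ℕ×ℕ).2 [MOD k]
  · by_cases hcol : (a : ℕ×ℕ).1 = (b : ℕ×ℕ).1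
    · have hne : (a : ℕ×ℕ).2 ≠ (b : ℕ×ℕ).2 := by
        intro h
        exact hab (Subtype.ext (Prod.ext hcol h))
      rcases Nat.lt_or_ge (a : ℕ×ℕ).2 (b : ℕ×ℕ).2 with hlt | hge
      · exact qp_samecol hk hM ha hb hcol hlt hcong
      · exact qp_samecol hk hM hb ha hcol.symm (by omega) hcong.symm
    · by_cases hc : (a : ℕ×ℕ) = ((0 : ℕ), (2 : ℕ))
      · refine qp_crosscol hk hM hb ha (fun h => hcol (h.symm)) hcong.symm (Or.inl ?_)
        intro h
        exact hcol (by rw [hc, h])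
      · exact qp_crosscol hk hM ha hb hcol hcong (Or.inl hc)
  · exact ⟨a, ha, b, hb, hcong⟩

lemma qp_cross {k : ℕ} (hk : 2 ≤ k) {M : Set Qset} (hM : IsModule (Qhat k) M)
    {p q : Qset} (hp : p ∈ M) (hq : q ∈ M)
    (hmod : ¬ (p : ℕ×ℕ).2 ≡ (q : ℕ×ℕ).2 [MOD k]) :
    ∃ u ∈ M, ∃ w ∈ M, (u : ℕ×ℕ).1 ≠ (w : ℕ×ℕ).1 ∧
      ¬ (u : ℕ×ℕ).2 ≡ (w : ℕ×ℕ).2 [MOD k] := by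
  by_cases hcol : (p : ℕ×ℕ).1 = (q : ℕ×ℕ).1
  · obtain ⟨⟨x, y⟩, hyQ⟩ := p
    obtain ⟨⟨x', y'⟩, hy'Q⟩ := q
    have hxx : x = x' := hcol
    have hmod' : ¬ y ≡ y' [MOD k] := hmod
    have hvQ : ((x + y + y' + 1, y) : ℕ×ℕ) ∈ Qset := qp_mem.mpr (by omega)
    have hadj : (Qhat k).Adj ⟨(x + y + y' + 1, y), hvQ⟩ ⟨(x', y'), hy'Q⟩ :=
      qp_adj.mpr (Or.inr ⟨show x + y + y' + 1 ≠ x' by omega, hmod'⟩)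
    have hnadj : ¬ (Qhat k).Adj ⟨(x + y + y' + 1, y), hvQ⟩ ⟨(x, y), hyQ⟩ := by
      intro hc
      rcases qp_adj.mp hc with ⟨h1, _⟩ | ⟨_, h2⟩
      · simp at h1; omega
      · exact h2 (Nat.ModEq.refl y)
    have hv : (⟨(x + y + y' + 1, y), hvQ⟩ : Qset) ∈ M := qp_absorb hM hq hp hadj hnadj
    exact ⟨⟨(x + y + y' + 1, y), hvQ⟩, hv, ⟨(x', y'), hy'Q⟩, hq,
      show x + y + y' + 1 ≠ x' by omega, hmod'⟩
  · exact ⟨p, hp, q, hq, hcol, hmod⟩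

lemma qp_univ {k : ℕ} (hk : 2 ≤ k) {M : Set Qset} (hM : IsModule (Qhat k) M)
    {u w : Qset} (hu : u ∈ M) (hw : w ∈ M) (hcol : (u : ℕ×ℕ).1 ≠ (w : ℕ×ℕ).1)
    (hmod : ¬ (u : ℕ×ℕ).2 ≡ (w : ℕ×ℕ).2 [MOD k]) : ∀ v : Qset, v ∈ M := by
  obtain ⟨⟨ux, uy⟩, huQ⟩ := u
  obtain ⟨⟨wx, wy⟩, hwQ⟩ := w
  have hcol' : ux ≠ wx := hcol
  have hmod' : ¬ uy ≡ wy [MOD k] := hmod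
  set N := 6 * k + ux + wx + 20 with hN
  -- Phase 1: columns x ≥ N, residue class uy - t, restricted heights
  have P1 : ∀ t, t ≤ 2 * k → ∀ x h, N ≤ x → h + t < x + 5 →
      h + t ≡ uy [MOD k] → ∀ hQ : ((x, h) : ℕ×ℕ) ∈ Qset, (⟨(x, h), hQ⟩ : Qset) ∈ M := by
    intro t
    induction t with
    | zero =>
      intro _ x h hx hh hm hQ
      have hm' : h ≡ uy [MOD k] := hm
      have hadj : (Qhat k).Adj ⟨(x, h), hQ⟩ ⟨(wx, wy), hwQ⟩ :=
        qp_adj.mpr (Or.inr ⟨show x ≠ wx by omega, fun hc => hmod' (hm'.symm.trans hc)⟩)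
      have hnadj : ¬ (Qhat k).Adj ⟨(x, h), hQ⟩ ⟨(ux, uy), huQ⟩ := by
        intro hc
        rcases qp_adj.mp hc with ⟨h1, _⟩ | ⟨_, h2⟩
        · simp at h1; omega
        · exact h2 hm'
      exact qp_absorb hM hw hu hadj hnadj
    | succ t ih =>
      intro ht x h hx hh hm hQ
      have ht' : t ≤ 2 * k := by omega
      have hpQ : ((x, h + 1) : ℕ×ℕ) ∈ Qset := qp_mem.mpr (by omega)
      have hpm : h + 1 + t ≡ uy [MOD k] := by
        rw [show h + 1 + t = h + (t + 1) by omega]; exact hm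
      have hp : (⟨(x, h + 1), hpQ⟩ : Qset) ∈ M := ih ht' x (h + 1) hx (by omega) hpm hpQ
      have hadjp : (Qhat k).Adj ⟨(x, h), hQ⟩ ⟨(x, h + 1), hpQ⟩ :=
        qp_adj.mpr (Or.inl ⟨rfl, by simp [Nat.dist]⟩)
      by_cases hK : 2 * k ≤ h + 1
      · set q2 := h + 1 - 2 * k with hq2
        have hq2m : q2 + t ≡ uy [MOD k] := by
          have h1 : q2 + t ≡ q2 + t + k * 2 [MOD k] := qp_modeq_add
          rw [show q2 + t + k * 2 = h + (t + 1) by omega] at h1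
          exact h1.trans hm
        have hqQ : ((x, q2) : ℕ×ℕ) ∈ Qset := qp_mem.mpr (by omega)
        have hqM : (⟨(x, q2), hqQ⟩ : Qset) ∈ M := ih ht' x q2 hx (by omega) hq2m hqQ
        have hnadj : ¬ (Qhat k).Adj ⟨(x, h), hQ⟩ ⟨(x, q2), hqQ⟩ := by
          intro hc
          rcases qp_adj.mp hc with ⟨_, hdd⟩ | ⟨hne, _⟩
          · simp [Nat.dist] at hdd; omega
          · exact hne rfl
        exact qp_absorb hM hp hqM hadjp hnadj
      · set q2 := h + 1 + 2 * k with hq2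
        have hq2m : q2 + t ≡ uy [MOD k] := by
          have h1 : h + (t + 1) ≡ h + (t + 1) + k * 2 [MOD k] := qp_modeq_add
          rw [show h + (t + 1) + k * 2 = q2 + t by omega] at h1
          exact h1.symm.trans hm
        have hqQ : ((x, q2) : ℕ×ℕ) ∈ Qset := qp_mem.mpr (by omega)
        have hqM : (⟨(x, q2), hqQ⟩ : Qset) ∈ M := ih ht' x q2 hx (by omega) hq2m hqQ
        have hnadj : ¬ (Qhat k).Adj ⟨(x, h), hQ⟩ ⟨(x, q2), hqQ⟩ := by
          intro hc
          rcases qp_adj.mp hc with ⟨_, hdd⟩ | ⟨hne, _⟩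
          · simp [Nat.dist] at hdd; omega
          · exact hne rfl
        exact qp_absorb hM hp hqM hadjp hnadj
  -- Phase 1': all residues, heights away from the top
  have P1' : ∀ x h, N ≤ x → h + 2 * k < x + 5 →
      ∀ hQ : ((x, h) : ℕ×ℕ) ∈ Qset, (⟨(x, h), hQ⟩ : Qset) ∈ M := by
    intro x h hx hh hQ
    set t := uy % k + (k - h % k) with htdef
    have h1 : h % k < k := Nat.mod_lt _ (by omega)
    have h2 : uy % k < k := Nat.mod_lt _ (by omega)
    have hdm := Nat.div_add_mod h k
    set m := k * (h / k) with hm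
    have ht : t ≤ 2 * k := by omega
    have heq : h + t = uy % k + (m + k) := by omega
    have hmodeq : h + t ≡ uy [MOD k] := by
      rw [heq]
      have h3 : uy % k ≡ uy % k + k * (h / k + 1) [MOD k] := qp_modeq_add
      have h4 : uy % k + (m + k) = uy % k + k * (h / k + 1) := by rw [hm]; ring
      rw [h4]
      exact h3.symm.trans (Nat.mod_modEq uy k)
    exact P1 t ht x h hx (by omega) hmodeq hQ
  -- Phase 2: everything in columns x ≥ N
  have P2 : ∀ x, N ≤ x → ∀ h, h < x + 5 →
      ∀ hQ : ((x, h) : ℕ×ℕ) ∈ Qset, (⟨(x, h), hQ⟩ : Qset) ∈ M := by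
    intro x hx h
    induction h using Nat.strong_induction_on with
    | _ h ih =>
      intro hh hQ
      by_cases hcase : h + 2 * k < x + 5
      · exact P1' x h hx hcase hQ
      · have hbig : 2 * k + 1 ≤ h := by omega
        have hpQ : ((x, h - 1) : ℕ×ℕ) ∈ Qset := qp_mem.mpr (by omega)
        have hqQ : ((x, h - 1 - 2 * k) : ℕ×ℕ) ∈ Qset := qp_mem.mpr (by omega)
        have hp := ih (h - 1) (by omega) (by omega) hpQ
        have hq := ih (h - 1 - 2 * k) (by omega) (by omega) hqQ
        have hadj : (Qhat k).Adj ⟨(x, h), hQ⟩ ⟨(x, h - 1), hpQ⟩ :=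
          qp_adj.mpr (Or.inl ⟨rfl, by simp [Nat.dist]; omega⟩)
        have hnadj : ¬ (Qhat k).Adj ⟨(x, h), hQ⟩ ⟨(x, h - 1 - 2 * k), hqQ⟩ := by
          intro hc
          rcases qp_adj.mp hc with ⟨_, hdd⟩ | ⟨hne, _⟩
          · simp [Nat.dist] at hdd; omega
          · exact hne rfl
        exact qp_absorb hM hp hq hadj hnadj
  -- Phase 3: every vertex
  intro v
  obtain ⟨⟨x, z⟩, hzQ⟩ := v
  have hpQ : ((N + x + z + 1, z + 1) : ℕ×ℕ) ∈ Qset := qp_mem.mpr (by omega)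
  have hqQ : ((N + x + z + 1, z) : ℕ×ℕ) ∈ Qset := qp_mem.mpr (by omega)
  have hp := P2 (N + x + z + 1) (by omega) (z + 1) (by omega) hpQ
  have hq := P2 (N + x + z + 1) (by omega) z (by omega) hqQ
  have hadj : (Qhat k).Adj ⟨(x, z), hzQ⟩ ⟨(N + x + z + 1, z + 1), hpQ⟩ :=
    qp_adj.mpr (Or.inr ⟨show x ≠ N + x + z + 1 by omega, qp_not_modeq_succ hk z⟩)
  have hnadj : ¬ (Qhat k).Adj ⟨(x, z), hzQ⟩ ⟨(N + x + z + 1, z), hqQ⟩ := by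
    intro hc
    rcases qp_adj.mp hc with ⟨h1, _⟩ | ⟨_, h2⟩
    · simp at h1; omega
    · exact h2 (Nat.ModEq.refl z)
  exact qp_absorb hM hp hq hadj hnadj

end QhatPrimeAux

theorem Qhat_prime (k : ℕ) (hk : 2 ≤ k) :
    ∀ M : Set Qset, IsModule (Qhat k) M → IsTrivialSet M := by
  intro M hM
  rcases Set.eq_empty_or_nonempty M with h0 | ⟨a, ha⟩
  · exact Or.inl h0
  by_cases h2 : ∃ b ∈ M, b ≠ a
  · obtain ⟨b, hb, hba⟩ := h2
    right; right
    obtain ⟨p, hp, q, hq, hpq⟩ := qp_incong hk hM hb ha hba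
    obtain ⟨u, hu, w, hw, hcw, hmw⟩ := qp_cross hk hM hp hq hpq
    exact Set.eq_univ_of_forall (qp_univ hk hM hu hw hcw hmw)
  · right; left
    refine ⟨a, Set.eq_singleton_iff_unique_mem.mpr ⟨ha, fun x hx => ?_⟩⟩
    by_contra hxa
    exact h2 ⟨x, hx, hxa⟩
end

section
/- Let P be a poset and let x_0, …, x_n be an induced path in the incomparability graph Inc(P): the x_i are pairwise distinct and x_i is incomparable to x_j if and only if |i − j| = 1. If x_0 < x_n in P, then x_i < x_j for all indices i, j with j ≥ i + 2. -/
open SimpleGraph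

theorem induced_path_in_incomparability_graph_increasing
    {α : Type*} [PartialOrder α] {n : ℕ} (x : Fin (n + 1) → α)
    (hx : IsInducedPath (incGraph α) x)
    (hends : x 0 < x (Fin.last n)) :
    ∀ i j : Fin (n + 1), i.val + 2 ≤ j.val → x i < x j := by
  obtain ⟨inj, adj⟩ := hx
  intro i j hij
  have hn : 2 ≤ n := by have := j.isLt; omega
  have incomp : ∀ a b : Fin (n + 1), b.val = a.val + 1 →
      ¬ x a ≤ x b ∧ ¬ x b ≤ x a := by
    intro a b h
    exact (adj a b).mpr (by simp [Nat.dist]; omega)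
  have comp : ∀ a b : Fin (n + 1), a.val + 2 ≤ b.val → x a < x b ∨ x b < x a := by
    intro a b h
    have hne : x a ≠ x b := by
      intro he
      have := inj he
      rw [Fin.ext_iff] at this
      omega
    have hnadj : ¬ (incGraph α).Adj (x a) (x b) := by
      rw [adj]; simp [Nat.dist]; omega
    have : x a ≤ x b ∨ x b ≤ x a := by
      by_contra hc
      push_neg at hc
      exact hnadj ⟨hc.1, hc.2⟩
    rcases this with h | h
    · exact Or.inl (lt_of_le_of_ne h hne)
    · exact Or.inr (lt_of_le_of_ne h hne.symm)
  have fwd : ∀ (a b : ℕ) (ha : a ≤ n) (hb : b + 1 ≤ n), a + 2 ≤ b →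
      x ⟨a, by omega⟩ < x ⟨b, by omega⟩ → x ⟨a, by omega⟩ < x ⟨b + 1, by omega⟩ := by
    intro a b ha hb hab hlt
    rcases comp ⟨a, by omega⟩ ⟨b + 1, by omega⟩ (by simp; omega) with h | h
    · exact h
    · exact absurd (le_of_lt (h.trans hlt))
        (incomp ⟨b, by omega⟩ ⟨b + 1, by omega⟩ rfl).2
  have dwd : ∀ (a b : ℕ) (ha : a ≤ n) (hb : b + 1 ≤ n), a + 2 ≤ b →
      x ⟨b, by omega⟩ < x ⟨a, by omega⟩ → x ⟨b + 1, by omega⟩ < x ⟨a, by omega⟩ := by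
    intro a b ha hb hab hlt
    rcases comp ⟨a, by omega⟩ ⟨b + 1, by omega⟩ (by simp; omega) with h | h
    · exact absurd (le_of_lt (hlt.trans h))
        (incomp ⟨b, by omega⟩ ⟨b + 1, by omega⟩ rfl).1
    · exact h
  have hends' : x ⟨0, by omega⟩ < x ⟨n, by omega⟩ := by
    have e0 : (0 : Fin (n + 1)) = ⟨0, by omega⟩ := by ext; simp
    have e1 : Fin.last n = ⟨n, by omega⟩ := rfl
    rwa [e0, e1] at hends
  have zero2 : x ⟨0, by omega⟩ < x ⟨2, by omega⟩ := by
    rcases comp ⟨0, by omega⟩ ⟨2, by omega⟩ (by simp) with h | h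
    · exact h
    · exfalso
      have hdesc : ∀ b, 2 ≤ b → ∀ hb : b ≤ n,
          x ⟨b, by omega⟩ < x ⟨0, by omega⟩ := by
        refine Nat.le_induction ?_ ?_
        · intro _; exact h
        · intro b hb2 ih hb1
          exact dwd 0 b (by omega) (by omega) (by omega) (ih (by omega))
      exact absurd hends' (not_lt_of_gt (hdesc n hn le_rfl))
  have dist2 : ∀ a, ∀ ha : a + 2 ≤ n, x ⟨a, by omega⟩ < x ⟨a + 2, by omega⟩ := by
    intro a
    induction a with
    | zero => intro _; exact zero2
    | succ a ih =>
      intro ha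
      have h0 : x ⟨a, by omega⟩ < x ⟨a + 2, by omega⟩ := ih (by omega)
      have h1 : x ⟨a, by omega⟩ < x ⟨a + 3, by omega⟩ :=
        fwd a (a + 2) (by omega) (by omega) (by omega) h0
      rcases comp ⟨a + 1, by omega⟩ ⟨a + 1 + 2, by omega⟩ (by simp) with h | h
      · exact h
      · exfalso
        have : x ⟨a, by omega⟩ < x ⟨a + 1, by omega⟩ := h1.trans h
        exact (incomp ⟨a, by omega⟩ ⟨a + 1, by omega⟩ rfl).1 this.le
  have gen : ∀ a b, ∀ hab : a + 2 ≤ b, ∀ hb : b ≤ n, x ⟨a, by omega⟩ < x ⟨b, by omega⟩ := by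
    intro a
    refine Nat.le_induction ?_ ?_
    · intro hb; exact dist2 a (by omega)
    · intro b hb2 ih hb1
      exact fwd a b (by omega) (by omega) (by omega) (ih (by omega))
  have ei : i = ⟨i.val, i.isLt⟩ := rfl
  have ej : j = ⟨j.val, j.isLt⟩ := rfl
  rw [ei, ej]
  exact gen i.val j.val hij (by omega)
end
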